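/- arXiv:1312.5862 — 3 statements merged into one kernel-verified Lean document; each statement's English description precedes it below -/
import Mathlib

section
/- Almost surely, sup_{|x| ≤ 1/2} |M_n(x)| = o(n^β) as n → ∞, for every β with (1+α)/2 < β < 1, where M_n(x) = Σ_{k=1}^{n} [ h_k^{−1} K((X_k − x)/h_k) − E(h_k^{−1} K((X_k − x)/h_k)) ]. -/
open MeasureTheory ProbabilityTheory Filter Set Real


lemma helper_integrable_of_bdd {Ω : Type*} [MeasureSpace Ω] [IsFiniteMeasure (ℙ : Measure Ω)]
    {φ : Ω → ℝ} (hm : AEStronglyMeasurable φ ℙ) {C : ℝ} (hb : ∀ ω, |φ ω| ≤ C) :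
    Integrable φ ℙ :=
  (integrable_const C).mono' hm (ae_of_all _ fun ω => by simpa [Real.norm_eq_abs] using hb ω)

lemma helper_exp_quad {x : ℝ} (hx : |x| ≤ 1) : Real.exp x ≤ 1 + x + x ^ 2 := by
  have h := Real.exp_bound hx (by norm_num : 0 < 3)
  have h2 : ∑ i ∈ Finset.range 3, x ^ i / (Nat.factorial i : ℝ) = 1 + x + x ^ 2 / 2 := by
    simp [Finset.sum_range_succ, Nat.factorial]
  have h3 : |x| ^ 3 * ((3 : ℕ).succ / ((Nat.factorial 3 : ℝ) * 3)) ≤ x ^ 2 * (2 / 9) := by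
    have : |x| ^ 3 ≤ |x| ^ 2 := pow_le_pow_of_le_one (abs_nonneg x) hx (by norm_num)
    have h4 : |x| ^ 2 = x ^ 2 := sq_abs x
    rw [show ((3:ℕ).succ / ((Nat.factorial 3 : ℝ) * 3)) = 2/9 by norm_num [Nat.factorial]]
    nlinarith [sq_nonneg x]
  rw [h2] at h
  have := abs_le.1 h
  nlinarith [sq_nonneg x]


lemma helper_mgf_le {Ω : Type*} [MeasureSpace Ω] [IsProbabilityMeasure (ℙ : Measure Ω)]
    {W : Ω → ℝ} (hWm : Measurable W) {m v l : ℝ}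
    (hb : ∀ ω, |W ω| ≤ m) (hcen : ∫ ω, W ω ∂ℙ = 0) (hv : ∫ ω, (W ω) ^ 2 ∂ℙ ≤ v)
    (hl : 0 ≤ l) (hlm : l * m ≤ 1) :
    mgf W ℙ l ≤ Real.exp (l ^ 2 * v) := by
  have hWint : Integrable W ℙ := helper_integrable_of_bdd hWm.aestronglyMeasurable hb
  have hW2int : Integrable (fun ω => (W ω) ^ 2) ℙ :=
    helper_integrable_of_bdd (hWm.pow_const 2).aestronglyMeasurable
      (C := m ^ 2) (fun ω => by
      rw [abs_pow]
      exact pow_le_pow_left₀ (abs_nonneg _) (hb ω) 2)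
  have hpt : ∀ ω, Real.exp (l * W ω) ≤ 1 + l * W ω + l ^ 2 * (W ω) ^ 2 := by
    intro ω
    have h1 : |l * W ω| ≤ 1 := by
      rw [abs_mul, abs_of_nonneg hl]
      calc l * |W ω| ≤ l * m := by
            exact mul_le_mul_of_nonneg_left (hb ω) hl
        _ ≤ 1 := hlm
    calc Real.exp (l * W ω) ≤ 1 + l * W ω + (l * W ω) ^ 2 := helper_exp_quad h1
      _ = 1 + l * W ω + l ^ 2 * (W ω) ^ 2 := by ring
  have hint2 : Integrable (fun ω => 1 + l * W ω + l ^ 2 * (W ω) ^ 2) ℙ :=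
    ((integrable_const 1).add (hWint.const_mul l)).add (hW2int.const_mul (l ^ 2))
  have hexpint : Integrable (fun ω => Real.exp (l * W ω)) ℙ :=
    helper_integrable_of_bdd (Real.measurable_exp.comp (hWm.const_mul l)).aestronglyMeasurable
      (C := Real.exp (|l| * m)) (fun ω => by
        rw [abs_of_nonneg (Real.exp_pos _).le]
        apply Real.exp_le_exp.2
        calc l * W ω ≤ |l * W ω| := le_abs_self _
          _ = |l| * |W ω| := abs_mul _ _
          _ ≤ |l| * m := mul_le_mul_of_nonneg_left (hb ω) (abs_nonneg _))
  calc mgf W ℙ l = ∫ ω, Real.exp (l * W ω) ∂ℙ := rfl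
    _ ≤ ∫ ω, (1 + l * W ω + l ^ 2 * (W ω) ^ 2) ∂ℙ :=
        integral_mono hexpint hint2 hpt
    _ = 1 + l * (∫ ω, W ω ∂ℙ) + l ^ 2 * ∫ ω, (W ω) ^ 2 ∂ℙ := by
        have hA : Integrable (fun ω => 1 + l * W ω) ℙ :=
          (integrable_const 1).add (hWint.const_mul l)
        have hB : Integrable (fun ω => l ^ 2 * (W ω) ^ 2) ℙ := hW2int.const_mul (l ^ 2)
        rw [integral_add hA hB, integral_add (integrable_const 1) (hWint.const_mul l),
          integral_const, integral_const_mul, integral_const_mul]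
        simp
    _ ≤ 1 + l ^ 2 * v := by
        rw [hcen, mul_zero, add_zero]
        have : (0:ℝ) ≤ l ^ 2 := sq_nonneg l
        nlinarith
    _ ≤ Real.exp (l ^ 2 * v) := by linarith [Real.add_one_le_exp (l ^ 2 * v)]


lemma helper_bernstein {Ω : Type*} [MeasureSpace Ω] [IsProbabilityMeasure (ℙ : Measure Ω)]
    {Z : ℕ → Ω → ℝ} (hind : iIndepFun Z ℙ)
    (hmeas : ∀ k, Measurable (Z k)) (n : ℕ) {m : ℝ} (hm0 : 0 ≤ m)
    (hb : ∀ k ∈ Finset.Icc 1 n, ∀ ω, |Z k ω| ≤ m)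
    (hcen : ∀ k ∈ Finset.Icc 1 n, ∫ ω, Z k ω ∂ℙ = 0)
    {v : ℕ → ℝ} (hv : ∀ k ∈ Finset.Icc 1 n, ∫ ω, (Z k ω) ^ 2 ∂ℙ ≤ v k)
    {l t : ℝ} (hl : 0 ≤ l) (hlm : l * m ≤ 1) :
    ℙ {ω | t ≤ ∑ k ∈ Finset.Icc 1 n, Z k ω}
      ≤ ENNReal.ofReal (Real.exp (-(l * t) + l ^ 2 * ∑ k ∈ Finset.Icc 1 n, v k)) := by
  classical
  set s := Finset.Icc 1 n with hs
  set S : Ω → ℝ := fun ω => ∑ k ∈ s, Z k ω with hS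
  have hSm : Measurable S := Finset.measurable_sum s (fun k _ => hmeas k)
  -- S is bounded
  have hSb : ∀ ω, |S ω| ≤ s.card * m := by
    intro ω
    calc |S ω| ≤ ∑ k ∈ s, |Z k ω| := Finset.abs_sum_le_sum_abs _ _
      _ ≤ ∑ k ∈ s, m := Finset.sum_le_sum (fun k hk => hb k hk ω)
      _ = s.card * m := by rw [Finset.sum_const, nsmul_eq_mul]
  -- integrability of exp (l * S)
  have hint : Integrable (fun ω => Real.exp (l * S ω)) ℙ := by
    apply helper_integrable_of_bdd
      (Real.measurable_exp.comp (hSm.const_mul l)).aestronglyMeasurable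
      (C := Real.exp (|l| * (s.card * m)))
    intro ω
    simp only [Function.comp_apply]
    rw [abs_of_nonneg (Real.exp_pos _).le]
    apply Real.exp_le_exp.2
    calc l * S ω ≤ |l * S ω| := le_abs_self _
      _ = |l| * |S ω| := abs_mul _ _
      _ ≤ |l| * (s.card * m) := mul_le_mul_of_nonneg_left (hSb ω) (abs_nonneg _)
  -- Chernoff
  have hch := measure_ge_le_exp_mul_mgf (X := S) (μ := ℙ) (t := l) t hl hint
  have hsum : (fun ω => ∑ k ∈ s, Z k ω) = ∑ k ∈ s, Z k := by
    funext ω; simp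
  have hmgf : mgf S ℙ l = ∏ k ∈ s, mgf (Z k) ℙ l := by
    rw [hS, hsum]; exact hind.mgf_sum hmeas s
  have hprod : ∏ k ∈ s, mgf (Z k) ℙ l ≤ ∏ k ∈ s, Real.exp (l ^ 2 * v k) := by
    apply Finset.prod_le_prod (fun k _ => mgf_nonneg)
    intro k hk
    exact helper_mgf_le (hmeas k) (hb k hk) (hcen k hk) (hv k hk) hl hlm
  have hprodexp : ∏ k ∈ s, Real.exp (l ^ 2 * v k) = Real.exp (l ^ 2 * ∑ k ∈ s, v k) := by
    rw [← Real.exp_sum, Finset.mul_sum]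
  have hfin : ℙ {ω | t ≤ S ω} ≠ ⊤ := measure_ne_top _ _
  have : (ℙ {ω | t ≤ S ω}).toReal ≤ Real.exp (-(l * t) + l ^ 2 * ∑ k ∈ s, v k) := by
    calc (ℙ {ω | t ≤ S ω}).toReal ≤ Real.exp (-l * t) * mgf S ℙ l := hch
      _ ≤ Real.exp (-l * t) * Real.exp (l ^ 2 * ∑ k ∈ s, v k) := by
          apply mul_le_mul_of_nonneg_left _ (Real.exp_pos _).le
          rw [hmgf]; exact hprod.trans (le_of_eq hprodexp)
      _ = Real.exp (-(l * t) + l ^ 2 * ∑ k ∈ s, v k) := by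
          rw [← Real.exp_add]; ring_nf
  calc ℙ {ω | t ≤ ∑ k ∈ s, Z k ω} = ENNReal.ofReal ((ℙ {ω | t ≤ S ω}).toReal) := by
        rw [ENNReal.ofReal_toReal hfin]
  _ ≤ ENNReal.ofReal (Real.exp (-(l * t) + l ^ 2 * ∑ k ∈ s, v k)) := ENNReal.ofReal_le_ofReal this


lemma helper_twosided {Ω : Type*} [MeasureSpace Ω] [IsProbabilityMeasure (ℙ : Measure Ω)]
    {Z Z' : ℕ → Ω → ℝ}
    (hind : iIndepFun Z ℙ)
    (hind' : iIndepFun Z' ℙ)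
    (hmeas : ∀ k, Measurable (Z k)) (hmeas' : ∀ k, Measurable (Z' k))
    (hZ'eq : ∀ k ω, Z' k ω = -(Z k ω))
    (n : ℕ) {m : ℝ} (hm0 : 0 ≤ m)
    (hb : ∀ k ∈ Finset.Icc 1 n, ∀ ω, |Z k ω| ≤ m)
    (hcen : ∀ k ∈ Finset.Icc 1 n, ∫ ω, Z k ω ∂ℙ = 0)
    {v : ℕ → ℝ} (hv : ∀ k ∈ Finset.Icc 1 n, ∫ ω, (Z k ω) ^ 2 ∂ℙ ≤ v k)
    {l t : ℝ} (hl : 0 ≤ l) (hlm : l * m ≤ 1) :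
    ℙ {ω | t < |∑ k ∈ Finset.Icc 1 n, Z k ω|}
      ≤ ENNReal.ofReal (2 * Real.exp (-(l * t) + l ^ 2 * ∑ k ∈ Finset.Icc 1 n, v k)) := by
  have htail1 := helper_bernstein hind hmeas n hm0 hb hcen hv hl hlm (t := t)
  have hb' : ∀ k ∈ Finset.Icc 1 n, ∀ ω, |Z' k ω| ≤ m := by
    intro k hk ω; rw [hZ'eq, abs_neg]; exact hb k hk ω
  have hcen' : ∀ k ∈ Finset.Icc 1 n, ∫ ω, Z' k ω ∂ℙ = 0 := by
    intro k hk
    have h1 : ∫ ω, Z' k ω ∂ℙ = -∫ ω, Z k ω ∂ℙ := by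
      rw [← integral_neg]
      exact integral_congr_ae (ae_of_all _ (fun ω => hZ'eq k ω))
    rw [h1, hcen k hk, neg_zero]
  have hv' : ∀ k ∈ Finset.Icc 1 n, ∫ ω, (Z' k ω) ^ 2 ∂ℙ ≤ v k := by
    intro k hk
    have h1 : ∫ ω, (Z' k ω)^2 ∂ℙ = ∫ ω, (Z k ω)^2 ∂ℙ :=
      integral_congr_ae (ae_of_all _ (fun ω => by
        show (Z' k ω)^2 = (Z k ω)^2
        rw [hZ'eq k ω, neg_sq]))
    rw [h1]; exact hv k hk
  have htail2 := helper_bernstein hind' hmeas' n hm0 hb' hcen' hv' hl hlm (t := t)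
  have hsub : {ω | t < |∑ k ∈ Finset.Icc 1 n, Z k ω|}
      ⊆ {ω | t ≤ ∑ k ∈ Finset.Icc 1 n, Z k ω} ∪ {ω | t ≤ ∑ k ∈ Finset.Icc 1 n, Z' k ω} := by
    intro ω hω
    simp only [mem_setOf_eq] at hω
    rcases abs_cases (∑ k ∈ Finset.Icc 1 n, Z k ω) with ⟨he, _⟩ | ⟨he, _⟩
    · left; rw [he] at hω; exact hω.le
    · right
      simp only [mem_setOf_eq, mem_union]
      have h2 : ∑ k ∈ Finset.Icc 1 n, Z' k ω = -∑ k ∈ Finset.Icc 1 n, Z k ω := by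
        rw [← Finset.sum_neg_distrib]
        exact Finset.sum_congr rfl (fun k _ => hZ'eq k ω)
      rw [h2, ← he]
      exact hω.le
  calc ℙ {ω | t < |∑ k ∈ Finset.Icc 1 n, Z k ω|}
      ≤ ℙ ({ω | t ≤ ∑ k ∈ Finset.Icc 1 n, Z k ω}
          ∪ {ω | t ≤ ∑ k ∈ Finset.Icc 1 n, Z' k ω}) := measure_mono hsub
    _ ≤ ℙ {ω | t ≤ ∑ k ∈ Finset.Icc 1 n, Z k ω}
          + ℙ {ω | t ≤ ∑ k ∈ Finset.Icc 1 n, Z' k ω} := measure_union_le _ _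
    _ ≤ ENNReal.ofReal (Real.exp (-(l * t) + l ^ 2 * ∑ k ∈ Finset.Icc 1 n, v k))
          + ENNReal.ofReal (Real.exp (-(l * t) + l ^ 2 * ∑ k ∈ Finset.Icc 1 n, v k)) :=
        add_le_add htail1 htail2
    _ = ENNReal.ofReal (2 * Real.exp (-(l * t) + l ^ 2 * ∑ k ∈ Finset.Icc 1 n, v k)) := by
        rw [← ENNReal.ofReal_add (Real.exp_pos _).le (Real.exp_pos _).le, two_mul]


lemma key_moment {Ω : Type*} [MeasureSpace Ω] [IsProbabilityMeasure (ℙ : Measure Ω)]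
    {X : Ω → ℝ} (hXm : Measurable X) {Cg' : ℝ} (hCg0 : 0 ≤ Cg')
    (hle : Measure.map X ℙ ≤ ENNReal.ofReal Cg' • volume)
    {K : ℝ → ℝ} (hKc : Continuous K) (hKsq : Integrable (fun u => K u ^ 2))
    {hk x : ℝ} (hhk : 0 < hk) :
    ∫ ω, (hk⁻¹ * K ((X ω - x)/hk))^2 ∂ℙ ≤ Cg' * (∫ u, K u ^ 2) * hk⁻¹ := by
  set φ : ℝ → ℝ := fun y => (hk⁻¹ * K ((y - x)/hk))^2 with hφ
  have hφc : Continuous φ := by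
    apply Continuous.pow
    exact continuous_const.mul (hKc.comp ((continuous_id.sub continuous_const).div_const hk))
  have hφ0 : ∀ y, 0 ≤ φ y := fun y => sq_nonneg _
  -- integrability over volume
  have hint : Integrable φ volume := by
    have h1 : Integrable (fun z => K (z / hk) ^ 2) volume := hKsq.comp_div hhk.ne'
    have h2 : Integrable (fun y => K ((y - x) / hk) ^ 2) volume := h1.comp_sub_right x
    exact (h2.const_mul ((hk⁻¹)^2)).congr (ae_of_all _ (fun y => by
      simp only [hφ, mul_pow]))
  -- value of the volume integral
  have hval : ∫ y, φ y = (hk⁻¹)^2 * (hk * ∫ u, K u ^ 2) := by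
    have e1 : ∫ y, φ y = (hk⁻¹)^2 * ∫ y, K ((y - x)/hk)^2 := by
      simp only [hφ, mul_pow]
      exact integral_const_mul _ _
    have e2 : ∫ y, K ((y - x)/hk)^2 = ∫ z, K (z/hk)^2 :=
      integral_sub_right_eq_self (fun z => K (z/hk)^2) x
    have e3 : ∫ z, K (z/hk)^2 = hk * ∫ u, K u ^ 2 := by
      rw [MeasureTheory.Measure.integral_comp_div (fun u => K u ^ 2) hk, smul_eq_mul,
        abs_of_pos hhk]
    rw [e1, e2, e3]
  -- transfer to ℙ
  have emap : ∫ ω, (hk⁻¹ * K ((X ω - x)/hk))^2 ∂ℙ = ∫ y, φ y ∂(Measure.map X ℙ) :=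
    (integral_map hXm.aemeasurable hφc.aestronglyMeasurable).symm
  have hintν : Integrable φ (ENNReal.ofReal Cg' • volume) :=
    hint.smul_measure ENNReal.ofReal_ne_top
  have hmono : ∫ y, φ y ∂(Measure.map X ℙ) ≤ ∫ y, φ y ∂(ENNReal.ofReal Cg' • volume) :=
    integral_mono_measure hle (ae_of_all _ hφ0) hintν
  have hsmul : ∫ y, φ y ∂(ENNReal.ofReal Cg' • volume) = Cg' * ∫ y, φ y := by
    rw [integral_smul_measure, ENNReal.toReal_ofReal hCg0, smul_eq_mul]
  rw [emap]
  calc ∫ y, φ y ∂(Measure.map X ℙ) ≤ Cg' * ∫ y, φ y := hmono.trans_eq hsmul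
    _ = Cg' * (∫ u, K u ^ 2) * hk⁻¹ := by
        rw [hval]; field_simp


set_option maxHeartbeats 4000000 in
lemma key_lemma {Ω : Type*} [MeasureSpace Ω] [IsProbabilityMeasure (ℙ : Measure Ω)]
    (X : ℕ → Ω → ℝ) (g K : ℝ → ℝ) (α : ℝ)
    (hα : 0 < α) (hα1 : α < 1)
    (hXm : ∀ k, Measurable (X k))
    (hindep : iIndepFun X ℙ)
    (hdens : ∀ k, Measure.map (X k) ℙ
        = MeasureTheory.volume.withDensity (fun x => ENNReal.ofReal (g x)))
    (hgbdd : ∃ C, ∀ x, g x ≤ C)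
    (hKpos : ∀ u, 0 ≤ K u) (hKbdd : ∃ C, ∀ u, K u ≤ C)
    (hKlip : ∃ L, LipschitzWith L K)
    (hKsq : Integrable (fun u => (K u) ^ 2))
    (h : ℕ → ℝ) (hh : ∀ k : ℕ, h k = (k : ℝ) ^ (-α))
    (M : ℕ → ℝ → Ω → ℝ)
    (hM : ∀ n x ω, M n x ω
        = ∑ k ∈ Finset.Icc 1 n,
            ((h k)⁻¹ * K ((X k ω - x) / h k)
              - ∫ ω', (h k)⁻¹ * K ((X k ω' - x) / h k) ∂ℙ))
    (β : ℝ) (hβ1 : (1 + α) / 2 < β) (hβ2 : β < 1) :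
    ∀ᵐ ω ∂ℙ, ∀ᶠ n in atTop,
      (⨆ x ∈ Icc (-(1/2) : ℝ) (1/2), |M n x ω|) ≤ (n : ℝ) ^ β := by
  classical
  obtain ⟨CK, hCK⟩ := hKbdd
  set CK' := max CK 1 with hCK'def
  have hCK1 : (1:ℝ) ≤ CK' := le_max_right _ _
  have hCK0 : (0:ℝ) ≤ CK' := by linarith
  have hKle : ∀ u, K u ≤ CK' := fun u => (hCK u).trans (le_max_left _ _)
  obtain ⟨Cg, hCg⟩ := hgbdd
  set Cg' := max Cg 0 with hCg'def
  have hCg0 : (0:ℝ) ≤ Cg' := le_max_right _ _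
  obtain ⟨L0, hL0⟩ := hKlip
  set L' := (L0:ℝ) + 1 with hL'def
  have hL'0 : (0:ℝ) < L' := by positivity
  have hKc : Continuous K := hL0.continuous
  set μsq := ∫ u, K u ^ 2 with hμsqdef
  have hμsq0 : 0 ≤ μsq := integral_nonneg (fun u => sq_nonneg _)
  set D := Cg' * μsq + 1 with hDdef
  have hD1 : (1:ℝ) ≤ D := by nlinarith
  have hD0 : (0:ℝ) < D := by linarith
  set c₀ := min (1/(2*CK')) (1/(4*D)) with hc₀def
  have hc₀pos : 0 < c₀ := by
    apply lt_min <;> positivity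
  have hc₀CK : c₀ * CK' ≤ 1/2 := by
    have h1 : c₀ ≤ 1/(2*CK') := min_le_left _ _
    have h2 : c₀ * (2*CK') ≤ 1 := (le_div_iff₀ (by positivity)).1 h1
    nlinarith
  have hc₀D : c₀ * D ≤ 1/4 := by
    have h1 : c₀ ≤ 1/(4*D) := min_le_right _ _
    have h2 : c₀ * (4*D) ≤ 1 := (le_div_iff₀ (by positivity)).1 h1
    nlinarith
  set γ := 2*β - 1 - α with hγdef
  have hγpos : 0 < γ := by simp only [hγdef]; linarith
  have hβpos : 0 < β := by linarith
  -- notation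
  set E : ℕ → ℝ → ℝ := fun k x => ∫ ω', (h k)⁻¹ * K ((X k ω' - x) / h k) ∂ℙ with hEdef
  set F : ℕ → ℝ → ℝ → ℝ := fun k x y => (h k)⁻¹ * K ((y - x) / h k) with hFdef
  set Z : ℝ → ℕ → Ω → ℝ := fun x k ω => F k x (X k ω) - E k x with hZdef
  have hMZ : ∀ n x ω, M n x ω = ∑ k ∈ Finset.Icc 1 n, Z x k ω := by
    intro n x ω; rw [hM]
  -- basic facts
  have hh0 : ∀ k, 0 ≤ h k := fun k => by rw [hh]; positivity
  have hhpos : ∀ k : ℕ, 1 ≤ k → 0 < h k := by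
    intro k hk; rw [hh]
    exact Real.rpow_pos_of_pos (by exact_mod_cast hk) _
  have hhinv : ∀ k : ℕ, (h k)⁻¹ = (k:ℝ) ^ α := by
    intro k; rw [hh, ← Real.rpow_neg (Nat.cast_nonneg k), neg_neg]
  have hhinv0 : ∀ k, 0 ≤ (h k)⁻¹ := fun k => inv_nonneg.2 (hh0 k)
  have hFcont : ∀ k x, Continuous (fun y => F k x y) := by
    intro k x
    exact continuous_const.mul (hKc.comp ((continuous_id.sub continuous_const).div_const _))
  have hF0 : ∀ k x y, 0 ≤ F k x y := fun k x y => mul_nonneg (hhinv0 k) (hKpos _)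
  have hFle : ∀ k x y, F k x y ≤ (h k)⁻¹ * CK' := fun k x y =>
    mul_le_mul_of_nonneg_left ((hKle _)) (hhinv0 k)
  have hFXm : ∀ k x, Measurable (fun ω => F k x (X k ω)) := fun k x =>
    ((hFcont k x).measurable).comp (hXm k)
  have hFXint : ∀ k x, Integrable (fun ω => F k x (X k ω)) ℙ := by
    intro k x
    apply helper_integrable_of_bdd (hFXm k x).aestronglyMeasurable (C := (h k)⁻¹ * CK')
    intro ω
    rw [abs_of_nonneg (hF0 k x _)]
    exact hFle k x _
  have hE0 : ∀ k x, 0 ≤ E k x := fun k x => integral_nonneg (fun ω => hF0 k x _)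
  have hEle : ∀ k x, E k x ≤ (h k)⁻¹ * CK' := by
    intro k x
    calc E k x ≤ ∫ _ω, (h k)⁻¹ * CK' ∂ℙ :=
          integral_mono (hFXint k x) (integrable_const _) (fun ω => hFle k x _)
      _ = (h k)⁻¹ * CK' := by simp
  have hZbd : ∀ x k ω, |Z x k ω| ≤ (h k)⁻¹ * CK' := by
    intro x k ω
    rw [abs_le]
    constructor
    · simp only [hZdef]; linarith [hF0 k x (X k ω), hEle k x]
    · simp only [hZdef]; linarith [hE0 k x, hFle k x (X k ω)]
  have hZm : ∀ x k, Measurable (Z x k) := fun x k => (hFXm k x).sub_const _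
  have hZind : ∀ x, iIndepFun (Z x) ℙ := by
    intro x
    exact hindep.comp (fun k y => F k x y - E k x)
      (fun k => ((hFcont k x).measurable).sub_const _)
  have hZcen : ∀ x k, ∫ ω, Z x k ω ∂ℙ = 0 := by
    intro x k
    simp only [hZdef]
    rw [integral_sub (hFXint k x) (integrable_const _), integral_const]
    simp [hEdef, hFdef]
  -- map measure bound
  have hmaple : ∀ k, Measure.map (X k) ℙ ≤ ENNReal.ofReal Cg' • volume := by
    intro k
    rw [hdens k]
    refine Measure.le_iff.2 (fun s hs => ?_)
    rw [withDensity_apply _ hs, Measure.smul_apply, smul_eq_mul]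
    calc ∫⁻ y in s, ENNReal.ofReal (g y) ∂volume
        ≤ ∫⁻ _y in s, ENNReal.ofReal Cg' ∂volume :=
          lintegral_mono (fun y => ENNReal.ofReal_le_ofReal ((hCg y).trans (le_max_left _ _)))
      _ = ENNReal.ofReal Cg' * volume s := by rw [setLIntegral_const]
  -- second moment
  have hZsq : ∀ x, ∀ k : ℕ, 1 ≤ k → ∫ ω, (Z x k ω) ^ 2 ∂ℙ ≤ D * (k:ℝ)^α := by
    intro x k hk1
    have hW2 : ∫ ω, (F k x (X k ω)) ^ 2 ∂ℙ ≤ Cg' * μsq * (h k)⁻¹ :=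
      key_moment (hXm k) hCg0 (hmaple k) hKc hKsq (hhpos k hk1)
    have hWint := hFXint k x
    have hW2int : Integrable (fun ω => (F k x (X k ω))^2) ℙ := by
      apply helper_integrable_of_bdd ((hFXm k x).pow_const 2).aestronglyMeasurable
        (C := ((h k)⁻¹ * CK')^2)
      intro ω
      rw [abs_pow]
      apply pow_le_pow_left₀ (abs_nonneg _)
      rw [abs_of_nonneg (hF0 k x _)]; exact hFle k x _
    have hvar : ∫ ω, (Z x k ω) ^ 2 ∂ℙ ≤ ∫ ω, (F k x (X k ω)) ^ 2 ∂ℙ := by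
      have hexp : ∀ ω, (Z x k ω)^2 = (F k x (X k ω))^2 - 2 * E k x * (F k x (X k ω))
          + (E k x)^2 := by
        intro ω; simp only [hZdef]; ring
      have hint1 : Integrable (fun ω => (F k x (X k ω))^2 - 2 * E k x * (F k x (X k ω))) ℙ :=
        hW2int.sub (hWint.const_mul _)
      calc ∫ ω, (Z x k ω) ^ 2 ∂ℙ
          = ∫ ω, ((F k x (X k ω))^2 - 2 * E k x * (F k x (X k ω)) + (E k x)^2) ∂ℙ := by
            apply integral_congr_ae (ae_of_all _ (fun ω => hexp ω))
        _ = (∫ ω, ((F k x (X k ω))^2 - 2 * E k x * (F k x (X k ω))) ∂ℙ) + (E k x)^2 := by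
            rw [integral_add hint1 (integrable_const _), integral_const]; simp
        _ = (∫ ω, (F k x (X k ω))^2 ∂ℙ) - 2 * E k x * E k x + (E k x)^2 := by
            rw [integral_sub hW2int (hWint.const_mul _), integral_const_mul]
        _ ≤ ∫ ω, (F k x (X k ω))^2 ∂ℙ := by nlinarith [sq_nonneg (E k x)]
    calc ∫ ω, (Z x k ω) ^ 2 ∂ℙ ≤ Cg' * μsq * (h k)⁻¹ := hvar.trans hW2
      _ = Cg' * μsq * (k:ℝ)^α := by rw [hhinv]
      _ ≤ D * (k:ℝ)^α := by
          apply mul_le_mul_of_nonneg_right _ (Real.rpow_nonneg (Nat.cast_nonneg k) _)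
          simp only [hDdef]; linarith
  clear_value Z F E CK' Cg' L' μsq D c₀ γ
  -- per point probability bound
  have hpoint : ∀ n : ℕ, 1 ≤ n → ∀ x : ℝ,
      ℙ {ω | (n:ℝ)^β/2 < |M n x ω|}
        ≤ ENNReal.ofReal (2 * Real.exp (-(c₀/4) * (n:ℝ)^γ)) := by
    intro n hn x
    set N := (n:ℝ) with hNdef
    have hN1 : (1:ℝ) ≤ N := by rw [hNdef]; exact_mod_cast hn
    have hN0 : (0:ℝ) < N := by linarith
    set l := c₀ * N^(β-1-α) with hldef
    have hl0 : (0:ℝ) ≤ l := by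
      rw [hldef]
      exact mul_nonneg hc₀pos.le (Real.rpow_nonneg hN0.le _)
    set t := N^β/2 with htdef
    set m := CK' * N^α with hmdef
    have hm0 : (0:ℝ) ≤ m := by
      rw [hmdef]
      exact mul_nonneg hCK0 (Real.rpow_nonneg hN0.le _)
    have hlm : l * m ≤ 1 := by
      have e1 : N^(β-1-α) * N^α = N^(β-1) := by
        rw [← Real.rpow_add hN0]; ring_nf
      have e2 : N^(β-1) ≤ 1 := Real.rpow_le_one_of_one_le_of_nonpos hN1 (by linarith)
      have e0 : (0:ℝ) ≤ N^(β-1) := Real.rpow_nonneg hN0.le _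
      calc l * m = (c₀ * CK') * (N^(β-1-α) * N^α) := by rw [hldef, hmdef]; ring
        _ = (c₀ * CK') * N^(β-1) := by rw [e1]
        _ ≤ (1/2) * 1 := mul_le_mul hc₀CK e2 e0 (by norm_num)
        _ ≤ 1 := by norm_num
    have hbd : ∀ k ∈ Finset.Icc 1 n, ∀ ω, |Z x k ω| ≤ m := by
      intro k hk ω
      obtain ⟨hk1, hkn⟩ := Finset.mem_Icc.1 hk
      calc |Z x k ω| ≤ (h k)⁻¹ * CK' := hZbd x k ω
        _ = (k:ℝ)^α * CK' := by rw [hhinv]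
        _ ≤ N^α * CK' := by
            apply mul_le_mul_of_nonneg_right _ hCK0
            exact Real.rpow_le_rpow (Nat.cast_nonneg _) (by rw [hNdef]; exact_mod_cast hkn) hα.le
        _ = m := by rw [hmdef]; ring
    have hvv : ∀ k ∈ Finset.Icc 1 n, ∫ ω, (Z x k ω)^2 ∂ℙ ≤ D * (k:ℝ)^α := fun k hk =>
      hZsq x k (Finset.mem_Icc.1 hk).1
    have hsumv : ∑ k ∈ Finset.Icc 1 n, D * (k:ℝ)^α ≤ D * N^(1+α) := by
      calc ∑ k ∈ Finset.Icc 1 n, D * (k:ℝ)^α ≤ ∑ _k ∈ Finset.Icc 1 n, D * N^α := by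
            apply Finset.sum_le_sum; intro k hk
            exact mul_le_mul_of_nonneg_left
              (Real.rpow_le_rpow (Nat.cast_nonneg _)
                (by rw [hNdef]; exact_mod_cast (Finset.mem_Icc.1 hk).2) hα.le) hD0.le
        _ = (n:ℝ) * (D * N^α) := by
            rw [Finset.sum_const, Nat.card_Icc, nsmul_eq_mul]
            norm_num
        _ = D * (N^(1:ℝ) * N^α) := by rw [Real.rpow_one]; ring
        _ = D * N^(1+α) := by rw [← Real.rpow_add hN0]
    have hexpbd : -(l*t) + l^2 * ∑ k ∈ Finset.Icc 1 n, D * (k:ℝ)^α ≤ -(c₀/4) * N^γ := by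
      have e1 : l * t = (c₀/2) * N^γ := by
        calc l * t = (c₀/2) * (N^(β-1-α) * N^β) := by rw [hldef, htdef]; ring
          _ = (c₀/2) * N^((β-1-α)+β) := by rw [← Real.rpow_add hN0]
          _ = (c₀/2) * N^γ := by rw [show (β-1-α)+β = γ by rw [hγdef]; ring]
      have e2 : l^2 * (D * N^(1+α)) = c₀^2 * D * N^γ := by
        calc l^2 * (D * N^(1+α)) = c₀^2 * D * (N^(β-1-α) * N^(β-1-α) * N^(1+α)) := by
              rw [hldef]; ring
          _ = c₀^2 * D * (N^((β-1-α)+(β-1-α)) * N^(1+α)) := by rw [← Real.rpow_add hN0]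
          _ = c₀^2 * D * N^((β-1-α)+(β-1-α)+(1+α)) := by rw [← Real.rpow_add hN0]
          _ = c₀^2 * D * N^γ := by rw [show (β-1-α)+(β-1-α)+(1+α) = γ by rw [hγdef]; ring]
      have e3 : l^2 * ∑ k ∈ Finset.Icc 1 n, D * (k:ℝ)^α ≤ c₀^2 * D * N^γ := by
        rw [← e2]
        exact mul_le_mul_of_nonneg_left hsumv (sq_nonneg l)
      have e4 : c₀^2 * D ≤ c₀/4 := by nlinarith
      have e5 : (0:ℝ) ≤ N^γ := Real.rpow_nonneg hN0.le γ
      have e6 : c₀^2 * D * N^γ ≤ (c₀/4) * N^γ := mul_le_mul_of_nonneg_right e4 e5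
      have e8 : l^2 * ∑ k ∈ Finset.Icc 1 n, D * (k:ℝ)^α ≤ (c₀/4) * N^γ := e3.trans e6
      rw [e1]
      linarith
    have hprob := helper_twosided (Z := Z x) (Z' := fun k ω => E k x - F k x (X k ω))
      (hZind x)
      (hindep.comp (fun k y => E k x - F k x y)
        (fun k => measurable_const.sub (hFcont k x).measurable))
      (hZm x) (fun k => measurable_const.sub (hFXm k x))
      (fun k ω => by show E k x - F k x (X k ω) = -(Z x k ω); rw [hZdef]; ring)
      n hm0 hbd (fun k _hk => hZcen x k) hvv hl0 hlm (t := t)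
    calc ℙ {ω | N^β/2 < |M n x ω|}
        = ℙ {ω | t < |∑ k ∈ Finset.Icc 1 n, Z x k ω|} := by
          congr 1; ext ω
          simp only [mem_setOf_eq, hMZ n x ω, htdef]
      _ ≤ ENNReal.ofReal (2 * Real.exp (-(l*t)
            + l^2 * ∑ k ∈ Finset.Icc 1 n, D * (k:ℝ)^α)) := hprob
      _ ≤ ENNReal.ofReal (2 * Real.exp (-(c₀/4) * N^γ)) := by
          apply ENNReal.ofReal_le_ofReal
          have h9 := Real.exp_le_exp.2 hexpbd
          linarith
  -- events
  set A : ℕ → Set Ω := fun n => ⋃ j ∈ Finset.range (n^3+1),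
      {ω | (n:ℝ)^β/2 < |M n (-(1/2) + (j:ℝ)/((n:ℝ)^3)) ω|} with hAdef
  have hA0 : A 0 = ∅ := by
    ext ω
    simp only [hAdef, mem_iUnion, mem_setOf_eq, mem_empty_iff_false, iff_false, not_exists]
    intro j _
    rw [hM]
    simp [Finset.Icc_eq_empty (by norm_num : ¬ (1:ℕ) ≤ 0),
      Real.zero_rpow hβpos.ne']
  have hPA : ∀ n : ℕ, ℙ (A n) ≤ ENNReal.ofReal
      (((n:ℝ)^3+1) * (2 * Real.exp (-(c₀/4) * (n:ℝ)^γ))) := by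
    intro n
    rcases Nat.eq_zero_or_pos n with rfl | hn
    · rw [hA0]
      simp
    calc ℙ (A n) ≤ ∑ j ∈ Finset.range (n^3+1),
          ℙ {ω | (n:ℝ)^β/2 < |M n (-(1/2) + (j:ℝ)/((n:ℝ)^3)) ω|} :=
          measure_biUnion_finset_le _ _
      _ ≤ ∑ _j ∈ Finset.range (n^3+1),
            ENNReal.ofReal (2 * Real.exp (-(c₀/4) * (n:ℝ)^γ)) :=
          Finset.sum_le_sum (fun j _ => hpoint n hn _)
      _ = (n^3+1) • ENNReal.ofReal (2 * Real.exp (-(c₀/4) * (n:ℝ)^γ)) := by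
          rw [Finset.sum_const, Finset.card_range]
      _ = ENNReal.ofReal (((n:ℝ)^3+1) * (2 * Real.exp (-(c₀/4) * (n:ℝ)^γ))) := by
          rw [nsmul_eq_mul, ← ENNReal.ofReal_natCast,
            ← ENNReal.ofReal_mul (by positivity)]
          congr 1
          push_cast
          ring
  -- summability
  have hsumm : Summable (fun n : ℕ => ((n:ℝ)^3+1) * (2 * Real.exp (-(c₀/4) * (n:ℝ)^γ))) := by
    have hc4 : (0:ℝ) < c₀/4 := by linarith
    have hT : Tendsto (fun n : ℕ =>
        ((n:ℝ)^γ)^((5:ℝ)/γ) * Real.exp (-(c₀/4) * (n:ℝ)^γ)) atTop (nhds 0) :=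
      (tendsto_rpow_mul_exp_neg_mul_atTop_nhds_zero ((5:ℝ)/γ) (c₀/4) hc4).comp
        ((tendsto_rpow_atTop hγpos).comp tendsto_natCast_atTop_atTop)
    have hev : ∀ᶠ n : ℕ in atTop,
        ((n:ℝ)^γ)^((5:ℝ)/γ) * Real.exp (-(c₀/4) * (n:ℝ)^γ) ≤ 1 := by
      have := hT.eventually (eventually_le_nhds (by norm_num : (0:ℝ) < 1))
      exact this
    apply summable_of_isBigO_nat (g := fun n : ℕ => (n:ℝ)^(-2:ℝ))
      (summable_nat_rpow.mpr (by norm_num))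
    rw [Asymptotics.isBigO_iff]
    refine ⟨8, ?_⟩
    filter_upwards [hev, eventually_ge_atTop 1] with n hn5 hn1
    have hN1 : (1:ℝ) ≤ (n:ℝ) := by exact_mod_cast hn1
    have hN0 : (0:ℝ) < (n:ℝ) := by linarith
    have hpow5 : ((n:ℝ)^γ)^((5:ℝ)/γ) = (n:ℝ)^(5:ℝ) := by
      rw [← Real.rpow_mul hN0.le]
      congr 1
      field_simp
    have he0 : (0:ℝ) < Real.exp (-(c₀/4) * (n:ℝ)^γ) := Real.exp_pos _
    set e := Real.exp (-(c₀/4) * (n:ℝ)^γ) with hedef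
    have h2 : (n:ℝ)^(5:ℝ) * e ≤ 1 := by rw [← hpow5]; exact hn5
    have h53 : (n:ℝ)^(-2:ℝ) * (n:ℝ)^(5:ℝ) = (n:ℝ)^(3:ℕ) := by
      have hq : (-2:ℝ)+5 = ((3:ℕ):ℝ) := by norm_num
      rw [← Real.rpow_add hN0, hq, Real.rpow_natCast]
    have h3 : (1:ℝ) ≤ (n:ℝ)^(3:ℕ) := one_le_pow₀ hN1
    have h4 : (n:ℝ)^(3:ℕ) * e ≤ (n:ℝ)^(-2:ℝ) := by
      calc (n:ℝ)^(3:ℕ) * e = (n:ℝ)^(-2:ℝ) * ((n:ℝ)^(5:ℝ) * e) := by rw [← h53]; ring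
        _ ≤ (n:ℝ)^(-2:ℝ) * 1 := mul_le_mul_of_nonneg_left h2 (Real.rpow_nonneg hN0.le _)
        _ = (n:ℝ)^(-2:ℝ) := mul_one _
    have h5 : e ≤ (n:ℝ)^(-2:ℝ) := by
      calc e = 1 * e := (one_mul e).symm
        _ ≤ (n:ℝ)^(3:ℕ) * e := mul_le_mul_of_nonneg_right h3 he0.le
        _ ≤ _ := h4
    rw [Real.norm_eq_abs, Real.norm_eq_abs, abs_of_nonneg (by positivity),
      abs_of_nonneg (Real.rpow_nonneg hN0.le _)]
    nlinarith [h4, h5, he0.le, Real.rpow_nonneg hN0.le (-2:ℝ)]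
  -- Borel-Cantelli
  have htsum : (∑' n, ℙ (A n)) ≠ ⊤ := by
    have hle : (∑' n, ℙ (A n)) ≤ ∑' n : ℕ, ENNReal.ofReal
        (((n:ℝ)^3+1) * (2 * Real.exp (-(c₀/4) * (n:ℝ)^γ))) := ENNReal.tsum_le_tsum hPA
    have heq : ∑' n : ℕ, ENNReal.ofReal (((n:ℝ)^3+1) * (2 * Real.exp (-(c₀/4) * (n:ℝ)^γ)))
        = ENNReal.ofReal (∑' n : ℕ, ((n:ℝ)^3+1) * (2 * Real.exp (-(c₀/4) * (n:ℝ)^γ))) :=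
      (ENNReal.ofReal_tsum_of_nonneg (fun n => by positivity) hsumm).symm
    rw [heq] at hle
    exact ne_top_of_le_ne_top ENNReal.ofReal_ne_top hle
  have hae := MeasureTheory.ae_eventually_notMem htsum
  -- Lipschitz bound on M in x
  have hFlip : ∀ k : ℕ, 1 ≤ k → ∀ y x x' : ℝ,
      |F k x y - F k x' y| ≤ L' * ((k:ℝ)^α)^2 * |x - x'| := by
    intro k hk1 y x x'
    have hpos := hhpos k hk1
    have hdiff : F k x y - F k x' y = (h k)⁻¹ * (K ((y-x)/h k) - K ((y-x')/h k)) := by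
      rw [hFdef]; ring
    have hKdiff : |K ((y-x)/h k) - K ((y-x')/h k)| ≤ (L0:ℝ) * (|x - x'| * (h k)⁻¹) := by
      have := hL0.dist_le_mul ((y-x)/h k) ((y-x')/h k)
      rw [Real.dist_eq, Real.dist_eq] at this
      calc |K ((y-x)/h k) - K ((y-x')/h k)| ≤ (L0:ℝ) * |(y-x)/h k - (y-x')/h k| := this
        _ = (L0:ℝ) * (|x - x'| * (h k)⁻¹) := by
            have heq2 : (y-x)/h k - (y-x')/h k = (x' - x)/h k := by
              rw [div_sub_div_same]
              congr 1
              ring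
            rw [heq2, abs_div, abs_of_pos hpos, abs_sub_comm, div_eq_mul_inv]
    calc |F k x y - F k x' y| = (h k)⁻¹ * |K ((y-x)/h k) - K ((y-x')/h k)| := by
          rw [hdiff, abs_mul, abs_of_nonneg (hhinv0 k)]
      _ ≤ (h k)⁻¹ * ((L0:ℝ) * (|x - x'| * (h k)⁻¹)) :=
          mul_le_mul_of_nonneg_left hKdiff (hhinv0 k)
      _ = (L0:ℝ) * ((h k)⁻¹)^2 * |x - x'| := by ring
      _ ≤ L' * ((k:ℝ)^α)^2 * |x - x'| := by
          rw [hhinv]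
          apply mul_le_mul_of_nonneg_right _ (abs_nonneg _)
          apply mul_le_mul_of_nonneg_right _ (sq_nonneg _)
          rw [hL'def]; linarith
  have hElip : ∀ k : ℕ, 1 ≤ k → ∀ x x' : ℝ,
      |E k x - E k x'| ≤ L' * ((k:ℝ)^α)^2 * |x - x'| := by
    intro k hk1 x x'
    have hEsub : E k x - E k x' = ∫ ω, (F k x (X k ω) - F k x' (X k ω)) ∂ℙ := by
      rw [integral_sub (hFXint k x) (hFXint k x'), hEdef, hFdef]
    rw [hEsub]
    have hintsub : Integrable (fun ω => F k x (X k ω) - F k x' (X k ω)) ℙ :=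
      (hFXint k x).sub (hFXint k x')
    calc |∫ ω, (F k x (X k ω) - F k x' (X k ω)) ∂ℙ|
        ≤ ∫ ω, |F k x (X k ω) - F k x' (X k ω)| ∂ℙ := by
          rw [← Real.norm_eq_abs]
          exact (norm_integral_le_integral_norm _).trans (le_of_eq (by simp [Real.norm_eq_abs]))
      _ ≤ ∫ _ω, L' * ((k:ℝ)^α)^2 * |x - x'| ∂ℙ :=
          integral_mono hintsub.abs (integrable_const _)
            (fun ω => hFlip k hk1 (X k ω) x x')
      _ = L' * ((k:ℝ)^α)^2 * |x - x'| := by simp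
  have hMlip : ∀ n : ℕ, 1 ≤ n → ∀ ω, ∀ x x' : ℝ,
      |M n x ω - M n x' ω| ≤ 2*L'*(n:ℝ)^(1+2*α)*|x - x'| := by
    intro n hn ω x x'
    have hN1 : (1:ℝ) ≤ (n:ℝ) := by exact_mod_cast hn
    have hN0 : (0:ℝ) < (n:ℝ) := by linarith
    have hterm : ∀ k ∈ Finset.Icc 1 n,
        |Z x k ω - Z x' k ω| ≤ 2*L'*((n:ℝ)^α)^2*|x - x'| := by
      intro k hk
      obtain ⟨hk1, hkn⟩ := Finset.mem_Icc.1 hk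
      have hkN : ((k:ℝ)^α)^2 ≤ ((n:ℝ)^α)^2 := by
        apply pow_le_pow_left₀ (Real.rpow_nonneg (Nat.cast_nonneg _) _)
        exact Real.rpow_le_rpow (Nat.cast_nonneg _) (by exact_mod_cast hkn) hα.le
      have h1 := hFlip k hk1 (X k ω) x x'
      have h2 := hElip k hk1 x x'
      have hZZ : Z x k ω - Z x' k ω
          = (F k x (X k ω) - F k x' (X k ω)) - (E k x - E k x') := by
        rw [hZdef]; ring
      calc |Z x k ω - Z x' k ω|
          ≤ |F k x (X k ω) - F k x' (X k ω)| + |E k x - E k x'| := by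
            rw [hZZ]; exact abs_sub _ _
        _ ≤ L' * ((k:ℝ)^α)^2 * |x - x'| + L' * ((k:ℝ)^α)^2 * |x - x'| := add_le_add h1 h2
        _ = 2*L'*((k:ℝ)^α)^2*|x - x'| := by ring
        _ ≤ 2*L'*((n:ℝ)^α)^2*|x - x'| := by
            apply mul_le_mul_of_nonneg_right _ (abs_nonneg _)
            apply mul_le_mul_of_nonneg_left hkN (by positivity)
    have hMsub : M n x ω - M n x' ω = ∑ k ∈ Finset.Icc 1 n, (Z x k ω - Z x' k ω) := by
      rw [hMZ n x ω, hMZ n x' ω, Finset.sum_sub_distrib]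
    calc |M n x ω - M n x' ω| ≤ ∑ k ∈ Finset.Icc 1 n, |Z x k ω - Z x' k ω| := by
          rw [hMsub]; exact Finset.abs_sum_le_sum_abs _ _
      _ ≤ ∑ _k ∈ Finset.Icc 1 n, 2*L'*((n:ℝ)^α)^2*|x - x'| := Finset.sum_le_sum hterm
      _ = (n:ℝ) * (2*L'*((n:ℝ)^α)^2*|x - x'|) := by
          rw [Finset.sum_const, Nat.card_Icc, nsmul_eq_mul]
          norm_num
      _ = 2*L'*((n:ℝ)^(1:ℝ) * ((n:ℝ)^α * (n:ℝ)^α))*|x - x'| := by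
          rw [Real.rpow_one]; ring
      _ = 2*L'*(n:ℝ)^(1+2*α)*|x - x'| := by
          rw [← Real.rpow_add hN0, ← Real.rpow_add hN0,
            show (1:ℝ)+(α+α) = 1+2*α by ring]
  -- conclusion
  have hNbig : ∀ᶠ n : ℕ in atTop, 4*L' ≤ (n:ℝ)^β :=
    (((tendsto_rpow_atTop hβpos).comp tendsto_natCast_atTop_atTop).eventually_ge_atTop (4*L'))
  filter_upwards [hae] with ω hω
  filter_upwards [hω, hNbig, eventually_ge_atTop 1] with n hωn h4L hn1
  have hN1 : (1:ℝ) ≤ (n:ℝ) := by exact_mod_cast hn1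
  have hN0 : (0:ℝ) < (n:ℝ) := by linarith
  have hrp0 : (0:ℝ) ≤ (n:ℝ)^β := Real.rpow_nonneg hN0.le _
  have hnot : ∀ j ∈ Finset.range (n^3+1),
      |M n (-(1/2) + (j:ℝ)/((n:ℝ)^3)) ω| ≤ (n:ℝ)^β/2 := by
    intro j hj
    by_contra hcon
    exact hωn (by
      rw [hAdef]
      exact mem_iUnion₂.2 ⟨j, hj, by simp only [mem_setOf_eq]; linarith [not_le.1 hcon]⟩)
  apply Real.iSup_le _ hrp0
  intro x
  apply Real.iSup_le _ hrp0
  intro hx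
  obtain ⟨hx1, hx2⟩ := hx
  set j := ⌊(x + 1/2) * (n:ℝ)^3⌋₊ with hjdef
  have hx120 : (0:ℝ) ≤ x + 1/2 := by linarith
  have hn30 : (0:ℝ) < (n:ℝ)^3 := by positivity
  have hj1 : (j:ℝ) ≤ (x+1/2) * (n:ℝ)^3 := Nat.floor_le (by positivity)
  have hj2 : (x+1/2) * (n:ℝ)^3 < (j:ℝ)+1 := Nat.lt_floor_add_one _
  have hjmem : j ∈ Finset.range (n^3+1) := by
    rw [Finset.mem_range, Nat.lt_succ_iff]
    have : (j:ℝ) ≤ ((n^3 : ℕ):ℝ) := by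
      push_cast
      calc (j:ℝ) ≤ (x+1/2) * (n:ℝ)^3 := hj1
        _ ≤ 1 * (n:ℝ)^3 := mul_le_mul_of_nonneg_right (by linarith) hn30.le
        _ = (n:ℝ)^3 := one_mul _
    exact_mod_cast this
  have hgd : |x - (-(1/2) + (j:ℝ)/((n:ℝ)^3))| ≤ 1/(n:ℝ)^3 := by
    have hA1 : (j:ℝ)/((n:ℝ)^3) ≤ x + 1/2 := by
      rw [div_le_iff₀ hn30]; linarith [hj1]
    have hA2 : x + 1/2 < ((j:ℝ)+1)/((n:ℝ)^3) := by
      rw [lt_div_iff₀ hn30]; linarith [hj2]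
    have hdd : ((j:ℝ)+1)/((n:ℝ)^3) - (j:ℝ)/((n:ℝ)^3) = 1/((n:ℝ)^3) := by
      rw [div_sub_div_same]; congr 1; ring
    have h0 : (0:ℝ) < 1/((n:ℝ)^3) := by positivity
    rw [abs_le]
    constructor
    · linarith
    · linarith
  have hlipbd : |M n x ω - M n (-(1/2) + (j:ℝ)/((n:ℝ)^3)) ω| ≤ 2*L' := by
    have h1 := hMlip n hn1 ω x (-(1/2) + (j:ℝ)/((n:ℝ)^3))
    have h2 : (n:ℝ)^((1:ℝ)+2*α) ≤ (n:ℝ)^((3:ℕ):ℝ) :=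
      Real.rpow_le_rpow_of_exponent_le hN1 (by push_cast; linarith)
    have h3 : (n:ℝ)^((3:ℕ):ℝ) = (n:ℝ)^(3:ℕ) := Real.rpow_natCast _ _
    calc |M n x ω - M n (-(1/2) + (j:ℝ)/((n:ℝ)^3)) ω|
        ≤ 2*L'*(n:ℝ)^(1+2*α)*|x - (-(1/2) + (j:ℝ)/((n:ℝ)^3))| := h1
      _ ≤ 2*L'*(n:ℝ)^(1+2*α)*(1/(n:ℝ)^3) := by
          apply mul_le_mul_of_nonneg_left hgd
          positivity
      _ ≤ 2*L'*(n:ℝ)^(3:ℕ)*(1/(n:ℝ)^3) := by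
          apply mul_le_mul_of_nonneg_right _ (by positivity)
          apply mul_le_mul_of_nonneg_left _ (by positivity)
          rw [← h3]; exact h2
      _ = 2*L' := by field_simp
  calc |M n x ω| ≤ |M n (-(1/2) + (j:ℝ)/((n:ℝ)^3)) ω|
        + |M n x ω - M n (-(1/2) + (j:ℝ)/((n:ℝ)^3)) ω| := by
        have := abs_sub_abs_le_abs_sub (M n x ω) (M n (-(1/2) + (j:ℝ)/((n:ℝ)^3)) ω)
        linarith [abs_sub_abs_le_abs_sub (M n x ω) (M n (-(1/2) + (j:ℝ)/((n:ℝ)^3)) ω)]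
    _ ≤ (n:ℝ)^β/2 + 2*L' := add_le_add (hnot j hjmem) hlipbd
    _ ≤ (n:ℝ)^β/2 + (n:ℝ)^β/2 := by linarith
    _ = (n:ℝ)^β := by ring

/-- Let `(X_k)_{k≥1}` be i.i.d. random variables with values in `[−1/2, 1/2]` and bounded
density `g`, let `K` be a nonnegative, bounded, Lipschitz kernel with compact support and
`∫ K² = μ² < ∞`, and set `h_k = k^(−α)` for `0 < α < 1`.  Define
`M_n(x) = ∑_{k=1}^{n} [h_k⁻¹ K((X_k − x)/h_k) − E(h_k⁻¹ K((X_k − x)/h_k))]`.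
Then almost surely, for every `β` with `(1+α)/2 < β < 1`,
`sup_{|x| ≤ 1/2} |M_n(x)| = o(n^β)` as `n → ∞`. -/
theorem stmt_8 {Ω : Type*} [MeasureSpace Ω] [IsProbabilityMeasure (ℙ : Measure Ω)]
    (X : ℕ → Ω → ℝ) (g K : ℝ → ℝ) (α : ℝ)
    (hα : 0 < α) (hα1 : α < 1)
    (hXm : ∀ k, Measurable (X k))
    (hindep : iIndepFun X ℙ)
    (hident : ∀ i j, IdentDistrib (X i) (X j) ℙ ℙ)
    (hXrange : ∀ k ω, X k ω ∈ Icc (-(1/2) : ℝ) (1/2))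
    (hdens : ∀ k, Measure.map (X k) ℙ
        = MeasureTheory.volume.withDensity (fun x => ENNReal.ofReal (g x)))
    (hgbdd : ∃ C, ∀ x, g x ≤ C)
    (hKpos : ∀ u, 0 ≤ K u) (hKbdd : ∃ C, ∀ u, K u ≤ C)
    (hKlip : ∃ L, LipschitzWith L K) (hKsupp : HasCompactSupport K)
    (hKsq : Integrable (fun u => (K u) ^ 2))
    (h : ℕ → ℝ) (hh : ∀ k : ℕ, h k = (k : ℝ) ^ (-α))
    (M : ℕ → ℝ → Ω → ℝ)
    (hM : ∀ n x ω, M n x ω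
        = ∑ k ∈ Finset.Icc 1 n,
            ((h k)⁻¹ * K ((X k ω - x) / h k)
              - ∫ ω', (h k)⁻¹ * K ((X k ω' - x) / h k) ∂ℙ)) :
    ∀ᵐ ω ∂ℙ, ∀ β : ℝ, (1 + α) / 2 < β → β < 1 →
      (fun n : ℕ => ⨆ x ∈ Icc (-(1/2) : ℝ) (1/2), |M n x ω|)
        =o[atTop] (fun n : ℕ => (n : ℝ) ^ β) := by
  have hae : ∀ᵐ ω ∂ℙ, ∀ q : ℚ, (1+α)/2 < (q:ℝ) → (q:ℝ) < 1 →
      ∀ᶠ n in atTop, (⨆ x ∈ Icc (-(1/2):ℝ) (1/2), |M n x ω|) ≤ (n:ℝ)^(q:ℝ) := by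
    rw [ae_all_iff]
    intro q
    by_cases h1 : (1+α)/2 < (q:ℝ)
    · by_cases h2 : (q:ℝ) < 1
      · filter_upwards [key_lemma X g K α hα hα1 hXm hindep hdens hgbdd hKpos hKbdd hKlip
          hKsq h hh M hM _ h1 h2] with ω hω using fun _ _ => hω
      · exact ae_of_all _ (fun ω _h1' h2' => absurd h2' h2)
    · exact ae_of_all _ (fun ω h1' => absurd h1' h1)
  filter_upwards [hae] with ω hω
  intro β hβ1 hβ2
  rw [Asymptotics.isLittleO_iff]
  intro c hc
  obtain ⟨q, hq1, hq2⟩ := exists_rat_btwn hβ1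
  have hq3 : (q:ℝ) < 1 := lt_trans hq2 hβ2
  have hev1 := hω q hq1 hq3
  have hTT : Tendsto (fun n : ℕ => (n:ℝ)^((q:ℝ)-β)) atTop (nhds 0) := by
    have h0 := (tendsto_rpow_neg_atTop (y := β - (q:ℝ)) (by linarith)).comp
      (tendsto_natCast_atTop_atTop (R := ℝ))
    have heq : (fun n : ℕ => (n:ℝ)^((q:ℝ)-β))
        = (fun x : ℝ => x ^ (-(β - (q:ℝ)))) ∘ (fun n : ℕ => (n:ℝ)) := by
      funext n
      simp only [Function.comp_apply, neg_sub]
    rw [heq]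
    exact h0
  have hev2 : ∀ᶠ n : ℕ in atTop, (n:ℝ)^((q:ℝ)-β) ≤ c :=
    hTT.eventually (eventually_le_nhds hc)
  filter_upwards [hev1, hev2, eventually_ge_atTop 1] with n h1 h2 hn1
  have hN1 : (1:ℝ) ≤ (n:ℝ) := by exact_mod_cast hn1
  have hN0 : (0:ℝ) < (n:ℝ) := by linarith
  have hrw : (n:ℝ)^(q:ℝ) = (n:ℝ)^((q:ℝ)-β) * (n:ℝ)^β := by
    rw [← Real.rpow_add hN0]
    congr 1
    ring
  have hsup0 : 0 ≤ ⨆ x ∈ Icc (-(1/2):ℝ) (1/2), |M n x ω| :=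
    Real.iSup_nonneg (fun x => Real.iSup_nonneg (fun _ => abs_nonneg _))
  simp only [Real.norm_eq_abs]
  rw [abs_of_nonneg hsup0, abs_of_nonneg (Real.rpow_nonneg hN0.le β)]
  calc (⨆ x ∈ Icc (-(1/2):ℝ) (1/2), |M n x ω|) ≤ (n:ℝ)^(q:ℝ) := h1
    _ = (n:ℝ)^((q:ℝ)-β) * (n:ℝ)^β := hrw
    _ ≤ c * (n:ℝ)^β := mul_le_mul_of_nonneg_right h2 (Real.rpow_nonneg hN0.le β)
end

section
/- For every real q < −1/2, lim_{n→∞} n^{1+2q} Σ_{k=1}^{n−2} ( Σ_{i=k+1}^{n−1} i^{−(2+q)} )² = 2/(q(1+2q)). -/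
open Filter Real MeasureTheory intervalIntegral Finset

namespace S14




lemma tendsto_nat_add (a : ℝ) : Tendsto (fun m : ℕ => (m : ℝ) + a) atTop atTop :=
  tendsto_atTop_add_const_right _ _ tendsto_natCast_atTop_atTop

lemma tendsto_ratio2 (a a' : ℝ) :
    Tendsto (fun m : ℕ => ((m : ℝ) + a) / ((m : ℝ) + a')) atTop (nhds 1) := by
  have h0 : Tendsto (fun m : ℕ => (a - a') / ((m : ℝ) + a')) atTop (nhds 0) :=
    tendsto_const_nhds.div_atTop (tendsto_nat_add a')
  have h1 : Tendsto (fun m : ℕ => 1 + (a - a') / ((m : ℝ) + a')) atTop (nhds 1) := by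
    simpa using tendsto_const_nhds.add h0
  apply h1.congr'
  filter_upwards [(tendsto_nat_add a').eventually_gt_atTop 0] with m hm
  field_simp
  ring

lemma tendsto_ratio2_rpow (a a' e : ℝ) :
    Tendsto (fun m : ℕ => (((m : ℝ) + a) / ((m : ℝ) + a')) ^ e) atTop (nhds 1) := by
  have h := (Real.continuousAt_rpow_const 1 e (Or.inl one_ne_zero)).tendsto.comp
    (tendsto_ratio2 a a')
  simpa [Function.comp_def] using h

lemma tendsto_rpow_neg' (c s : ℝ) (hs : 0 < s) :
    Tendsto (fun m : ℕ => ((m : ℝ) + c) ^ (-s)) atTop (nhds 0) :=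
  (tendsto_rpow_neg_atTop hs).comp (tendsto_nat_add c)

lemma sum_shift_one (f : ℕ → ℝ) (n : ℕ) :
    ∑ i ∈ Ico 1 (n + 1), f i = ∑ k ∈ Finset.Icc 1 n, f k := by
  rw [Finset.Ico_add_one_right_eq_Icc]

lemma sum_Icc_eq_head_add (f : ℕ → ℝ) (n : ℕ) (hn : 1 ≤ n) :
    ∑ k ∈ Finset.Icc 1 n, f k = f 1 + ∑ i ∈ Ico 1 n, f (i + 1) := by
  rw [← Finset.Ico_add_one_right_eq_Icc, Finset.sum_eq_sum_Ico_succ_bot (by omega) f]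
  congr 1
  rw [Finset.sum_Ico_add' f 1 n 1]

lemma sum_Icc_eq_shift (f : ℕ → ℝ) (n : ℕ) :
    ∑ k ∈ Finset.Icc 1 n, f k = ∑ i ∈ Ico 0 n, f (i + 1) := by
  rw [Finset.sum_Ico_add' f 0 n 1, zero_add, Finset.Ico_add_one_right_eq_Icc]

lemma anti_rpow (r : ℝ) (hr : r ≤ 0) (a b : ℝ) (ha : 1 ≤ a) :
    AntitoneOn (fun x : ℝ => x ^ r) (Set.Icc a b) := by
  intro x hx y _ hxy
  exact Real.rpow_le_rpow_of_nonpos (lt_of_lt_of_le one_pos (le_trans ha hx.1)) hxy hr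

lemma mono_rpow (r : ℝ) (hr : 0 ≤ r) (a b : ℝ) (ha : 0 ≤ a) :
    MonotoneOn (fun x : ℝ => x ^ r) (Set.Icc a b) := by
  intro x hx y _ hxy
  exact Real.rpow_le_rpow (le_trans ha hx.1) hxy hr

lemma lemA (r : ℝ) (hr : -1 < r) :
    Tendsto (fun n : ℕ => (∑ k ∈ Finset.Icc 1 n, (k : ℝ) ^ r) / (n : ℝ) ^ (r + 1))
      atTop (nhds (1 / (r + 1))) := by
  set s := r + 1 with hs_def
  have hs : 0 < s := by linarith
  -- limit of the two explicit bound functions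
  have hlow : Tendsto (fun n : ℕ => ((((n : ℝ) + 1) ^ s - 1) / s) / (n : ℝ) ^ s)
      atTop (nhds (1 / s)) := by
    have H := ((tendsto_ratio2_rpow 1 0 s).sub (tendsto_rpow_neg' 0 s hs)).div_const s
    rw [show ((1:ℝ) - 0) / s = 1 / s by ring] at H
    apply H.congr'
    filter_upwards [eventually_ge_atTop 1] with n hn
    have hn0 : (0:ℝ) < (n:ℝ) := by exact_mod_cast hn
    have hns : (0:ℝ) < (n:ℝ) ^ s := Real.rpow_pos_of_pos hn0 s
    rw [add_zero, Real.div_rpow (by positivity) hn0.le, Real.rpow_neg hn0.le]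
    field_simp
  have hup0 : Tendsto (fun n : ℕ => (1 + ((n : ℝ) ^ s - 1) / s) / (n : ℝ) ^ s)
      atTop (nhds (1 / s)) := by
    have H := (((tendsto_rpow_neg' 0 s hs).const_mul (1 - 1/s)).add
      (tendsto_const_nhds (x := (1:ℝ)/s)))
    rw [show (1 - 1/s) * 0 + 1/s = 1/s by ring] at H
    apply H.congr'
    filter_upwards [eventually_ge_atTop 1] with n hn
    have hn0 : (0:ℝ) < (n:ℝ) := by exact_mod_cast hn
    have hns : (0:ℝ) < (n:ℝ) ^ s := Real.rpow_pos_of_pos hn0 s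
    rw [add_zero, Real.rpow_neg hn0.le]
    field_simp
    ring
  rcases le_or_gt r 0 with hr0 | hr0
  · -- antitone case
    apply tendsto_of_tendsto_of_tendsto_of_le_of_le' hlow hup0
    · filter_upwards [eventually_ge_atTop 1] with n hn
      have hn0 : (0:ℝ) < (n:ℝ) := by exact_mod_cast hn
      gcongr
      have h1 : (∫ x in ((1:ℕ):ℝ)..(((n+1:ℕ)):ℝ), x ^ r) ≤ ∑ i ∈ Ico 1 (n+1), ((i:ℝ)) ^ r := by
        apply AntitoneOn.integral_le_sum_Ico (by omega)
        exact anti_rpow r hr0 _ _ (by norm_num)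
      rw [integral_rpow (Or.inl hr)] at h1
      rw [sum_shift_one (fun i => (i:ℝ) ^ r) n] at h1
      calc (((n:ℝ) + 1) ^ s - 1) / s = (((n+1:ℕ):ℝ) ^ s - ((1:ℕ):ℝ) ^ s) / s := by
            push_cast; rw [Real.one_rpow]
        _ ≤ _ := by rw [hs_def]; exact h1
    · filter_upwards [eventually_ge_atTop 1] with n hn
      have hn0 : (0:ℝ) < (n:ℝ) := by exact_mod_cast hn
      gcongr
      have h1 : (∑ i ∈ Ico 1 n, (((i+1:ℕ)):ℝ) ^ r) ≤ ∫ x in ((1:ℕ):ℝ)..((n:ℕ):ℝ), x ^ r := by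
        exact AntitoneOn.sum_le_integral_Ico (f := fun x : ℝ => x ^ r) hn
          (anti_rpow r hr0 _ _ (by norm_num))
      rw [integral_rpow (Or.inl hr)] at h1
      rw [sum_Icc_eq_head_add (fun i => (i:ℝ) ^ r) n hn]
      push_cast at h1 ⊢
      rw [Real.one_rpow] at h1 ⊢
      rw [← hs_def] at h1
      linarith
  · -- monotone case
    have hlow2 : Tendsto (fun n : ℕ => ((n:ℝ) ^ s / s) / (n : ℝ) ^ s) atTop (nhds (1/s)) := by
      apply tendsto_const_nhds.congr'
      filter_upwards [eventually_ge_atTop 1] with n hn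
      have hn0 : (0:ℝ) < (n:ℝ) := by exact_mod_cast hn
      have hns : (0:ℝ) < (n:ℝ) ^ s := Real.rpow_pos_of_pos hn0 s
      field_simp
    apply tendsto_of_tendsto_of_tendsto_of_le_of_le' hlow2 hlow
    · filter_upwards [eventually_ge_atTop 1] with n hn
      have hn0 : (0:ℝ) < (n:ℝ) := by exact_mod_cast hn
      gcongr
      have h1 : (∫ x in ((0:ℕ):ℝ)..((n:ℕ):ℝ), x ^ r) ≤ ∑ i ∈ Ico 0 n, (((i+1:ℕ)):ℝ) ^ r := by
        apply MonotoneOn.integral_le_sum_Ico (by omega)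
        exact mono_rpow r hr0.le _ _ (by norm_num)
      rw [integral_rpow (Or.inl hr)] at h1
      rw [← sum_Icc_eq_shift (fun i => (i:ℝ) ^ r) n] at h1
      calc (n:ℝ) ^ s / s = (((n:ℕ):ℝ) ^ s - ((0:ℕ):ℝ) ^ s) / s := by
            rw [Nat.cast_zero, Real.zero_rpow (ne_of_gt hs)]; ring
        _ ≤ _ := by rw [hs_def]; exact h1
    · filter_upwards [eventually_ge_atTop 1] with n hn
      have hn0 : (0:ℝ) < (n:ℝ) := by exact_mod_cast hn
      gcongr
      have h1 : (∑ i ∈ Ico 1 (n+1), ((i:ℝ)) ^ r) ≤ ∫ x in ((1:ℕ):ℝ)..(((n+1:ℕ)):ℝ), x ^ r := by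
        exact MonotoneOn.sum_le_integral_Ico (f := fun x : ℝ => x ^ r) (by omega)
          (mono_rpow r hr0.le _ _ (by norm_num))
      rw [integral_rpow (Or.inl hr)] at h1
      rw [sum_shift_one (fun i => (i:ℝ) ^ r) n] at h1
      calc (∑ k ∈ Finset.Icc 1 n, (k:ℝ) ^ r) ≤ (((n+1:ℕ):ℝ) ^ s - ((1:ℕ):ℝ) ^ s)/s := by
            rw [hs_def]; exact h1
        _ = (((n:ℝ)+1) ^ s - 1)/s := by push_cast; rw [Real.one_rpow]





lemma lemA' (r : ℝ) (hr : -1 < r) (c : ℕ) :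
    Tendsto (fun m : ℕ => (∑ k ∈ Finset.Icc 1 (m + c), (k : ℝ) ^ r) * ((m : ℝ) + 3) ^ (-(r + 1)))
      atTop (nhds (1 / (r + 1))) := by
  have h1 := (lemA r hr).comp (tendsto_add_atTop_nat c)
  have h2 := tendsto_ratio2_rpow c 3 (r + 1)
  have H := h1.mul h2
  rw [mul_one] at H
  apply H.congr'
  filter_upwards [eventually_ge_atTop 1] with m hm
  have h3 : (0:ℝ) < (m:ℝ) + 3 := by positivity
  simp only [Function.comp]
  have hcast : ((m + c : ℕ) : ℝ) = (m : ℝ) + c := by push_cast; ring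
  have hm1 : (1:ℝ) ≤ (m:ℝ) := by exact_mod_cast hm
  have hmc0 : (0:ℝ) < (m:ℝ) + c := by positivity
  rw [hcast, Real.div_rpow hmc0.le h3.le, Real.rpow_neg h3.le]
  have hne : ((m:ℝ) + c) ^ (r+1) ≠ 0 := ne_of_gt (Real.rpow_pos_of_pos hmc0 _)
  have hne3 : ((m:ℝ) + 3) ^ (r+1) ≠ 0 := ne_of_gt (Real.rpow_pos_of_pos h3 _)
  field_simp

lemma shift_sum (r : ℝ) (c m : ℕ) :
    ∑ k ∈ Finset.Icc 1 (m + 1), ((k : ℝ) + (c : ℝ)) ^ r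
      = (∑ k ∈ Finset.Icc 1 (m + 1 + c), (k : ℝ) ^ r) - ∑ k ∈ Finset.Icc 1 c, (k : ℝ) ^ r := by
  have h1 : ∑ k ∈ Finset.Icc 1 (m + 1), ((k : ℝ) + (c : ℝ)) ^ r
      = ∑ k ∈ Finset.Icc 1 (m + 1), (((k + c : ℕ) : ℝ)) ^ r := by
    apply Finset.sum_congr rfl; intro k _; push_cast; ring_nf
  rw [h1]
  have h2 : ∑ k ∈ Finset.Icc 1 (m + 1), (((k + c : ℕ) : ℝ)) ^ r
      = ∑ j ∈ Ico (1 + c) (m + 2 + c), ((j : ℝ)) ^ r := by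
    rw [← Finset.sum_Ico_add' (fun j : ℕ => ((j : ℝ)) ^ r) 1 (m + 2) c, show m + 2 = m + 1 + 1 from rfl,
      Finset.Ico_add_one_right_eq_Icc]
  rw [h2]
  have e1 : Finset.Icc 1 (m + 1 + c) = Finset.Ioc 0 (m + 1 + c) := by
    rw [← Finset.Icc_add_one_left_eq_Ioc]; rfl
  have e2 : Finset.Icc 1 c = Finset.Ioc 0 c := by rw [← Finset.Icc_add_one_left_eq_Ioc]; rfl
  have e3 : Ico (1 + c) (m + 2 + c) = Finset.Ioc c (m + 1 + c) := by
    rw [show 1 + c = c + 1 by omega, show m + 2 + c = (m + 1 + c) + 1 by omega,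
      Finset.Ico_add_one_right_eq_Icc, Finset.Icc_add_one_left_eq_Ioc]
  rw [e1, e2, e3]
  have := Finset.sum_Ioc_consecutive (fun j : ℕ => ((j : ℝ)) ^ r)
    (by omega : 0 ≤ c) (by omega : c ≤ m + 1 + c)
  linarith

lemma sum_expand (b : ℝ) (hb0 : b ≠ 0) (c₁ c₂ m : ℕ) :
    ∑ k ∈ Finset.Icc 1 (m + 1),
        ((((m:ℝ) + 2 + (c₁:ℝ)) ^ b - ((k:ℝ) + (c₂:ℝ)) ^ b) / b) ^ 2
      = (((m:ℝ) + 1) * (((m:ℝ) + 2 + (c₁:ℝ)) ^ b) ^ 2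
          - 2 * ((m:ℝ) + 2 + (c₁:ℝ)) ^ b *
            ((∑ k ∈ Finset.Icc 1 (m + 1 + c₂), (k : ℝ) ^ b) - ∑ k ∈ Finset.Icc 1 c₂, (k : ℝ) ^ b)
          + ((∑ k ∈ Finset.Icc 1 (m + 1 + c₂), (k : ℝ) ^ (2*b))
              - ∑ k ∈ Finset.Icc 1 c₂, (k : ℝ) ^ (2*b))) / b ^ 2 := by
  set V := ((m:ℝ) + 2 + (c₁:ℝ)) ^ b with hV
  have h1 : ∀ k ∈ Finset.Icc 1 (m + 1),
      ((V - ((k:ℝ) + (c₂:ℝ)) ^ b) / b) ^ 2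
        = (V ^ 2 - 2 * V * ((k:ℝ) + (c₂:ℝ)) ^ b + ((k:ℝ) + (c₂:ℝ)) ^ (2*b)) / b ^ 2 := by
    intro k hk
    have hk1 : 1 ≤ k := (Finset.mem_Icc.mp hk).1
    have hkpos : (0:ℝ) < (k:ℝ) + (c₂:ℝ) := by
      have : (1:ℝ) ≤ (k:ℝ) := by exact_mod_cast hk1
      positivity
    have hw : ((k:ℝ) + (c₂:ℝ)) ^ (2*b) = ((k:ℝ) + (c₂:ℝ)) ^ b * ((k:ℝ) + (c₂:ℝ)) ^ b := by
      rw [two_mul, Real.rpow_add hkpos]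
    rw [hw]
    field_simp
    ring
  rw [Finset.sum_congr rfl h1, ← Finset.sum_div]
  congr 1
  rw [Finset.sum_add_distrib, Finset.sum_sub_distrib, Finset.sum_const, ← Finset.mul_sum,
    Nat.card_Icc]
  rw [shift_sum b c₂ m, shift_sum (2*b) c₂ m]
  simp only [Nat.add_sub_cancel]
  ring

lemma key (b : ℝ) (hb : -(1/2) < b) (hb0 : b ≠ 0) (c₁ c₂ : ℕ) :
    Tendsto (fun m : ℕ => ((m:ℝ) + 3) ^ (-(1 + 2*b)) *
        ∑ k ∈ Finset.Icc 1 (m + 1),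
          ((((m:ℝ) + 2 + (c₁:ℝ)) ^ b - ((k:ℝ) + (c₂:ℝ)) ^ b) / b) ^ 2)
      atTop (nhds (2 / ((1 + b) * (1 + 2*b)))) := by
  have hb1 : (0:ℝ) < 1 + b := by linarith
  have hb2 : (0:ℝ) < 1 + 2*b := by linarith
  have hbr : (-1:ℝ) < b := by linarith
  have hbr2 : (-1:ℝ) < 2*b := by linarith
  -- positivity helpers (per m)
  have hpos : ∀ m : ℕ, (0:ℝ) < (m:ℝ) + 3 := fun m => by positivity
  have hxpos : ∀ m : ℕ, (0:ℝ) < (m:ℝ) + 2 + (c₁:ℝ) := fun m => by positivity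
  -- powers of (m+3) expressed via atoms
  have hsplit : ∀ m : ℕ, ((m:ℝ)+3) ^ (-(1 + 2*b))
      = ((((m:ℝ)+3) * (((m:ℝ)+3) ^ b) ^ 2))⁻¹ := by
    intro m
    rw [Real.rpow_neg (hpos m).le]
    congr 1
    rw [show (1:ℝ) + 2*b = 1 + (b + b) by ring, Real.rpow_add (hpos m), Real.rpow_add (hpos m),
      Real.rpow_one, pow_two]
  have hP : ∀ m : ℕ, (0:ℝ) < ((m:ℝ)+3) ^ b := fun m => Real.rpow_pos_of_pos (hpos m) b
  -- T1
  have T1 : Tendsto (fun m : ℕ => ((m:ℝ)+1) * (((m:ℝ)+2+(c₁:ℝ)) ^ b) ^ 2 *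
      (((m:ℝ)+3) ^ (-(1 + 2*b)))) atTop (nhds 1) := by
    have H := (tendsto_ratio2 1 3).mul (tendsto_ratio2_rpow (2+(c₁:ℝ)) 3 (2*b))
    rw [mul_one] at H
    apply H.congr
    intro m
    have h3 := hpos m; have hx := hxpos m
    have e1 : ((m:ℝ) + (2+(c₁:ℝ))) = ((m:ℝ)+2+(c₁:ℝ)) := by ring
    rw [e1, Real.div_rpow hx.le h3.le, hsplit m]
    have e2 : ((m:ℝ)+2+(c₁:ℝ)) ^ (2*b) = (((m:ℝ)+2+(c₁:ℝ)) ^ b) ^ 2 := by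
      rw [two_mul, Real.rpow_add hx, pow_two]
    have e3 : ((m:ℝ)+3) ^ (2*b) = (((m:ℝ)+3) ^ b) ^ 2 := by
      rw [two_mul, Real.rpow_add (hpos m), pow_two]
    rw [e2, e3]
    have hPne : (((m:ℝ)+3) ^ b) ≠ 0 := ne_of_gt (hP m)
    field_simp
  -- T2
  have T2 : Tendsto (fun m : ℕ => (((m:ℝ)+2+(c₁:ℝ)) ^ b) *
      (∑ k ∈ Finset.Icc 1 (m + 1 + c₂), (k : ℝ) ^ b) * (((m:ℝ)+3) ^ (-(1 + 2*b))))
      atTop (nhds (1 / (1 + b))) := by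
    have H := (tendsto_ratio2_rpow (2+(c₁:ℝ)) 3 b).mul (lemA' b hbr (1 + c₂))
    rw [one_mul, show b + 1 = 1 + b by ring] at H
    apply H.congr
    intro m
    have h3 := hpos m; have hx := hxpos m
    have e1 : ((m:ℝ) + (2+(c₁:ℝ))) = ((m:ℝ)+2+(c₁:ℝ)) := by ring
    have e4 : m + (1 + c₂) = m + 1 + c₂ := by omega
    rw [e1, e4, Real.div_rpow hx.le h3.le, hsplit m]
    have e5 : ((m:ℝ)+3) ^ (-(1+b)) = (((m:ℝ)+3) * ((m:ℝ)+3) ^ b)⁻¹ := by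
      rw [Real.rpow_neg (hpos m).le, Real.rpow_add (hpos m), Real.rpow_one]
    rw [e5]
    have hPne : (((m:ℝ)+3) ^ b) ≠ 0 := ne_of_gt (hP m)
    field_simp
  -- T2'
  have T2' : Tendsto (fun m : ℕ => (((m:ℝ)+2+(c₁:ℝ)) ^ b) * (((m:ℝ)+3) ^ (-(1 + 2*b))))
      atTop (nhds 0) := by
    have H := (tendsto_ratio2_rpow (2+(c₁:ℝ)) 3 b).mul (tendsto_rpow_neg' 3 (1+b) hb1)
    rw [one_mul] at H
    apply H.congr
    intro m
    have h3 := hpos m; have hx := hxpos m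
    have e1 : ((m:ℝ) + (2+(c₁:ℝ))) = ((m:ℝ)+2+(c₁:ℝ)) := by ring
    rw [e1, Real.div_rpow hx.le h3.le, hsplit m]
    have e5 : ((m:ℝ)+3) ^ (-(1+b)) = (((m:ℝ)+3) * ((m:ℝ)+3) ^ b)⁻¹ := by
      rw [Real.rpow_neg (hpos m).le, Real.rpow_add (hpos m), Real.rpow_one]
    rw [e5]
    have hPne : (((m:ℝ)+3) ^ b) ≠ 0 := ne_of_gt (hP m)
    field_simp
  -- T3
  have T3 : Tendsto (fun m : ℕ => (∑ k ∈ Finset.Icc 1 (m + 1 + c₂), (k : ℝ) ^ (2*b)) *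
      (((m:ℝ)+3) ^ (-(1 + 2*b)))) atTop (nhds (1 / (1 + 2*b))) := by
    have H := lemA' (2*b) hbr2 (1 + c₂)
    rw [show 2*b + 1 = 1 + 2*b by ring] at H
    apply H.congr
    intro m
    have e4 : m + (1 + c₂) = m + 1 + c₂ := by omega
    rw [e4]
  -- T3'
  have T3' : Tendsto (fun m : ℕ => ((m:ℝ)+3) ^ (-(1 + 2*b))) atTop (nhds 0) :=
    tendsto_rpow_neg' 3 (1 + 2*b) hb2
  -- combine
  set K1 : ℝ := ∑ k ∈ Finset.Icc 1 c₂, (k : ℝ) ^ b with hK1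
  set K2 : ℝ := ∑ k ∈ Finset.Icc 1 c₂, (k : ℝ) ^ (2*b) with hK2
  have H := (((T1.sub ((T2.sub (T2'.const_mul K1)).const_mul 2)).add
      (T3.sub (T3'.const_mul K2))).mul_const (1 / b ^ 2))
  have hval : (1 - 2 * (1 / (1+b) - K1 * 0) + (1 / (1+2*b) - K2 * 0)) * (1 / b^2)
      = 2 / ((1 + b) * (1 + 2*b)) := by
    have hbne : b ≠ 0 := hb0
    field_simp
    ring
  rw [hval] at H
  apply H.congr
  intro m
  rw [sum_expand b hb0 c₁ c₂ m]
  ring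





lemma anti_rpow' (r : ℝ) (hr : r ≤ 0) (a b : ℝ) (ha : 1 ≤ a) :
    AntitoneOn (fun x : ℝ => x ^ r) (Set.Icc a b) := by
  intro x hx y _ hxy
  exact Real.rpow_le_rpow_of_nonpos (lt_of_lt_of_le one_pos (le_trans ha hx.1)) hxy hr

lemma mono_rpow' (r : ℝ) (hr : 0 ≤ r) (a b : ℝ) (ha : 0 ≤ a) :
    MonotoneOn (fun x : ℝ => x ^ r) (Set.Icc a b) := by
  intro x hx y _ hxy
  exact Real.rpow_le_rpow (le_trans ha hx.1) hxy hr

lemma inner_shift (p : ℝ) (k m : ℕ) :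
    ∑ i ∈ Finset.Icc (k+1) (m+2), (i:ℝ) ^ p = ∑ i ∈ Ico k (m+2), ((i+1 : ℕ) : ℝ) ^ p := by
  rw [Finset.sum_Ico_add' (fun j : ℕ => ((j : ℝ)) ^ p) k (m+2) 1, Finset.Ico_add_one_right_eq_Icc]

lemma L1 (p : ℝ) (hp : p ≤ 0) (k m : ℕ) (hk : 1 ≤ k) (hkm : k ≤ m + 2) :
    ∑ i ∈ Finset.Icc (k+1) (m+2), (i:ℝ) ^ p ≤ ∫ x in (k:ℝ)..((m:ℝ)+2), x ^ p := by
  rw [inner_shift]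
  have h := AntitoneOn.sum_le_integral_Ico (f := fun x : ℝ => x ^ p) (a := k) (b := m+2) hkm
    (anti_rpow' p hp _ _ (by exact_mod_cast hk))
  convert h using 2
  push_cast; ring

lemma L2 (p : ℝ) (hp : p ≤ 0) (k m : ℕ) (hk : 1 ≤ k) (hkm : k ≤ m + 1) :
    (∫ x in ((k:ℝ)+1)..((m:ℝ)+2), x ^ p) ≤ ∑ i ∈ Finset.Icc (k+1) (m+2), (i:ℝ) ^ p := by
  have h := AntitoneOn.integral_le_sum_Ico (f := fun x : ℝ => x ^ p) (a := k+1) (b := m+2)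
    (by omega) (anti_rpow' p hp _ _ (by have : (0:ℝ) ≤ (k:ℝ) := Nat.cast_nonneg k; push_cast; linarith))
  have h2 : ∑ i ∈ Ico (k+1) (m+2), ((i:ℝ)) ^ p ≤ ∑ i ∈ Finset.Icc (k+1) (m+2), (i:ℝ) ^ p := by
    apply Finset.sum_le_sum_of_subset_of_nonneg
    · rw [show m + 2 = m + 1 + 1 from rfl, Finset.Ico_add_one_right_eq_Icc]; exact Finset.Icc_subset_Icc_right (by omega)
    · intro i _ _; exact Real.rpow_nonneg (Nat.cast_nonneg i) p
  refine le_trans (le_trans (le_of_eq ?_) h) h2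
  push_cast; ring_nf

lemma L3 (p : ℝ) (hp : 0 ≤ p) (k m : ℕ) (hk : 1 ≤ k) (hkm : k ≤ m + 2) :
    (∫ x in (k:ℝ)..((m:ℝ)+2), x ^ p) ≤ ∑ i ∈ Finset.Icc (k+1) (m+2), (i:ℝ) ^ p := by
  rw [inner_shift]
  have h := MonotoneOn.integral_le_sum_Ico (f := fun x : ℝ => x ^ p) (a := k) (b := m+2) hkm
    (mono_rpow' p hp _ _ (Nat.cast_nonneg k))
  convert h using 2
  push_cast; ring

lemma L4 (p : ℝ) (hp : 0 ≤ p) (k m : ℕ) (hk : 1 ≤ k) (hkm : k ≤ m + 1) :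
    ∑ i ∈ Finset.Icc (k+1) (m+2), (i:ℝ) ^ p ≤ ∫ x in ((k:ℝ)+1)..((m:ℝ)+3), x ^ p := by
  have h := MonotoneOn.sum_le_integral_Ico (f := fun x : ℝ => x ^ p) (a := k+1) (b := m+3)
    (by omega) (mono_rpow' p hp _ _ (Nat.cast_nonneg _))
  have h2 : ∑ i ∈ Finset.Icc (k+1) (m+2), (i:ℝ) ^ p = ∑ i ∈ Ico (k+1) (m+3), ((i:ℝ)) ^ p := by
    rw [show m + 3 = m + 2 + 1 from rfl, Finset.Ico_add_one_right_eq_Icc]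
  rw [h2]
  refine le_trans h (le_of_eq ?_)
  push_cast; ring_nf

lemma main_gen (q : ℝ) (hq : q < -(1/2)) (hq1 : q ≠ -1) :
    Tendsto (fun m : ℕ => ((m:ℝ)+3) ^ (1 + 2*q) *
        ∑ k ∈ Finset.Icc 1 (m+1),
          (∑ i ∈ Finset.Icc (k+1) (m+2), (i:ℝ) ^ (-(2+q))) ^ 2)
      atTop (nhds (2 / (q * (1 + 2*q)))) := by
  set p : ℝ := -(2+q) with hp_def
  set b : ℝ := p + 1 with hb_def
  have hb : -(1/2) < b := by rw [hb_def, hp_def]; linarith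
  have hb0 : b ≠ 0 := by
    rw [hb_def, hp_def]; intro h; apply hq1; linarith [h]
  have hpb : p ≠ -1 := by intro h; apply hb0; rw [hb_def, h]; ring
  have hexp : (1:ℝ) + 2*q = -(1 + 2*b) := by rw [hb_def, hp_def]; ring
  have hlim : 2 / (q * (1 + 2*q)) = 2 / ((1 + b) * (1 + 2*b)) := by
    rw [hb_def, hp_def]; ring_nf
  rw [hlim]
  simp only [hexp]
  -- integral closed form rewriting helper
  have hint : ∀ (a c : ℝ), 1 ≤ a → a ≤ c →
      (∫ x in a..c, x ^ p) = (c ^ b - a ^ b) / b := by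
    intro a c ha hac
    rw [integral_rpow (Or.inr ⟨hpb, by
      rw [Set.uIcc_of_le hac]
      intro hmem
      exact absurd (Set.mem_Icc.mp hmem).1 (by linarith)⟩)]
  have hintnn : ∀ (a c : ℝ), 1 ≤ a → a ≤ c → 0 ≤ (c ^ b - a ^ b) / b := by
    intro a c ha hac
    rw [← hint a c ha hac]
    apply intervalIntegral.integral_nonneg hac
    intro x hx
    exact Real.rpow_nonneg (by linarith [(Set.mem_Icc.mp hx).1]) p
  have hSnn : ∀ k m : ℕ, 0 ≤ ∑ i ∈ Finset.Icc (k+1) (m+2), (i:ℝ) ^ p :=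
    fun k m => Finset.sum_nonneg fun i _ => Real.rpow_nonneg (Nat.cast_nonneg i) p
  rcases le_or_gt p 0 with hp0 | hp0
  · -- antitone case : bounds with (c₁,c₂) = (0,1) lower and (0,0) upper
    have KL := key b hb hb0 0 1
    have KU := key b hb hb0 0 0
    simp only [Nat.cast_zero, Nat.cast_one, add_zero] at KL KU
    apply tendsto_of_tendsto_of_tendsto_of_le_of_le' KL KU
    · apply Eventually.of_forall
      intro m
      apply mul_le_mul_of_nonneg_left _ (Real.rpow_nonneg (by positivity) _)
      apply Finset.sum_le_sum
      intro k hk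
      obtain ⟨hk1, hk2⟩ := Finset.mem_Icc.mp hk
      have hka : (1:ℝ) ≤ (k:ℝ)+1 := by have : (0:ℝ) ≤ (k:ℝ) := Nat.cast_nonneg k; linarith
      have hkc : ((k:ℝ)+1) ≤ (m:ℝ)+2 := by
        have : (k:ℝ) ≤ (m:ℝ)+1 := by exact_mod_cast hk2
        linarith
      apply pow_le_pow_left₀ (hintnn _ _ hka hkc)
      rw [← hint _ _ hka hkc]
      exact L2 p hp0 k m hk1 hk2
    · apply Eventually.of_forall
      intro m
      apply mul_le_mul_of_nonneg_left _ (Real.rpow_nonneg (by positivity) _)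
      apply Finset.sum_le_sum
      intro k hk
      obtain ⟨hk1, hk2⟩ := Finset.mem_Icc.mp hk
      have hka : (1:ℝ) ≤ (k:ℝ) := by exact_mod_cast hk1
      have hkc : ((k:ℝ)) ≤ (m:ℝ)+2 := by
        have : (k:ℝ) ≤ (m:ℝ)+1 := by exact_mod_cast hk2
        linarith
      apply pow_le_pow_left₀ (hSnn k m)
      rw [← hint _ _ hka hkc]
      exact L1 p hp0 k m hk1 (by omega)
  · -- monotone case : bounds with (c₁,c₂) = (0,0) lower and (1,1) upper
    have KL := key b hb hb0 0 0
    have KU := key b hb hb0 1 1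
    simp only [Nat.cast_zero, Nat.cast_one, add_zero] at KL KU
    apply tendsto_of_tendsto_of_tendsto_of_le_of_le' KL KU
    · apply Eventually.of_forall
      intro m
      apply mul_le_mul_of_nonneg_left _ (Real.rpow_nonneg (by positivity) _)
      apply Finset.sum_le_sum
      intro k hk
      obtain ⟨hk1, hk2⟩ := Finset.mem_Icc.mp hk
      have hka : (1:ℝ) ≤ (k:ℝ) := by exact_mod_cast hk1
      have hkc : ((k:ℝ)) ≤ (m:ℝ)+2 := by
        have : (k:ℝ) ≤ (m:ℝ)+1 := by exact_mod_cast hk2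
        linarith
      apply pow_le_pow_left₀ (hintnn _ _ hka hkc)
      rw [← hint _ _ hka hkc]
      exact L3 p hp0.le k m hk1 (by omega)
    · apply Eventually.of_forall
      intro m
      apply mul_le_mul_of_nonneg_left _ (Real.rpow_nonneg (by positivity) _)
      apply Finset.sum_le_sum
      intro k hk
      obtain ⟨hk1, hk2⟩ := Finset.mem_Icc.mp hk
      have hka : (1:ℝ) ≤ (k:ℝ)+1 := by have : (0:ℝ) ≤ (k:ℝ) := Nat.cast_nonneg k; linarith
      have hkc : ((k:ℝ)+1) ≤ (m:ℝ)+3 := by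
        have : (k:ℝ) ≤ (m:ℝ)+1 := by exact_mod_cast hk2
        linarith
      have e : ((m:ℝ)+2+1) = (m:ℝ)+3 := by ring
      rw [e]
      apply pow_le_pow_left₀ (hSnn k m)
      rw [← hint _ _ hka hkc]
      exact L4 p hp0.le k m hk1 hk2





noncomputable def Lg (m : ℕ) : ℝ := Real.log ((m:ℝ) + 2)

lemma hquad (A B C : ℝ) :
    Tendsto (fun m : ℕ => (A * (Lg m) ^ 2 + B * (Lg m) + C) * ((m:ℝ) + 3)⁻¹)
      atTop (nhds 0) := by
  have base : ∀ j : ℕ, Tendsto (fun m : ℕ => (Lg m) ^ j * ((m:ℝ) + 3)⁻¹) atTop (nhds 0) := by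
    intro j
    have h := (Real.tendsto_pow_log_div_mul_add_atTop 1 1 j one_ne_zero).comp
      (tendsto_nat_add 2)
    apply h.congr
    intro m
    simp only [Function.comp, Lg]
    rw [div_eq_mul_inv]
    norm_num
    left
    ring
  have H := (((base 2).const_mul A).add ((base 1).const_mul B)).add ((base 0).const_mul C)
  norm_num at H
  apply H.congr
  intro m
  ring

lemma log_diff_tendsto (c : ℝ) (hc : 0 ≤ c) :
    Tendsto (fun m : ℕ => Lg m - Real.log ((m:ℝ) + 1 + c)) atTop (nhds 0) := by
  have hr : Tendsto (fun m : ℕ => ((m:ℝ) + 2) / ((m:ℝ) + (1 + c))) atTop (nhds 1) :=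
    tendsto_ratio2 2 (1 + c)
  have h := ((Real.continuousAt_log one_ne_zero).tendsto.comp hr)
  rw [Real.log_one] at h
  apply h.congr
  intro m
  simp only [Function.comp]
  rw [Real.log_div (by positivity) (by positivity)]
  simp only [Lg]
  ring_nf

noncomputable def Fg (L : ℝ) (y : ℝ) : ℝ :=
  y * ((L - Real.log y) ^ 2 + 2 * (L - Real.log y) + 2)

lemma Fg_deriv (L y : ℝ) (hy : 0 < y) :
    HasDerivAt (Fg L) ((L - Real.log y) ^ 2) y := by
  have hlog := Real.hasDerivAt_log (ne_of_gt hy)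
  have hu : HasDerivAt (fun y : ℝ => L - Real.log y) (-y⁻¹) y := by
    have h := (hasDerivAt_const y L).sub hlog
    rw [zero_sub] at h
    exact h
  have hu2 : HasDerivAt (fun y : ℝ => (L - Real.log y) ^ 2)
      ((2:ℕ) * (L - Real.log y) ^ 1 * (-y⁻¹)) y := hu.pow 2
  have hw : HasDerivAt (fun y : ℝ => (L - Real.log y) ^ 2 + 2 * (L - Real.log y) + 2)
      ((2:ℕ) * (L - Real.log y) ^ 1 * (-y⁻¹) + 2 * (-y⁻¹)) y := by
    exact (hu2.add (hu.const_mul 2)).add_const 2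
  have hF := (hasDerivAt_id y).mul hw
  convert hF using 1
  · rfl
  · rfl
  · rfl
  have : y ≠ 0 := ne_of_gt hy
  have hyi : y * y⁻¹ = 1 := mul_inv_cancel₀ this
  simp only [id, Nat.cast_ofNat, pow_one]
  linear_combination (2 * (L - Real.log y) + 2) * hyi

lemma integral_G (L : ℝ) (c₂ : ℕ) (m : ℕ) :
    (∫ x in (1:ℝ)..((m:ℝ)+1), (L - Real.log (x + (c₂:ℝ))) ^ 2)
      = Fg L ((m:ℝ) + 1 + (c₂:ℝ)) - Fg L (1 + (c₂:ℝ)) := by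
  have h1 : (∫ x in (1:ℝ)..((m:ℝ)+1), (L - Real.log (x + (c₂:ℝ))) ^ 2)
      = ∫ y in (1 + (c₂:ℝ))..((m:ℝ)+1+(c₂:ℝ)), (L - Real.log y) ^ 2 := by
    rw [← intervalIntegral.integral_comp_add_right (fun y => (L - Real.log y) ^ 2) (c₂:ℝ)]
  rw [h1]
  have hle : (1 + (c₂:ℝ)) ≤ ((m:ℝ)+1+(c₂:ℝ)) := by
    have : (0:ℝ) ≤ (m:ℝ) := Nat.cast_nonneg m
    linarith
  apply intervalIntegral.integral_eq_sub_of_hasDerivAt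
  · intro y hy
    rw [Set.uIcc_of_le hle] at hy
    have hy1 : (1:ℝ) ≤ y := by
      have := hy.1
      have hc : (0:ℝ) ≤ (c₂:ℝ) := Nat.cast_nonneg c₂
      linarith
    exact Fg_deriv L y (by linarith)
  · apply ContinuousOn.intervalIntegrable
    apply ContinuousOn.pow
    apply ContinuousOn.sub continuousOn_const
    apply Real.continuousOn_log.mono
    intro y hy
    rw [Set.uIcc_of_le hle] at hy
    have hc : (0:ℝ) ≤ (c₂:ℝ) := Nat.cast_nonneg c₂
    simp only [Set.mem_compl_iff, Set.mem_singleton_iff]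
    intro h0
    rw [h0] at hy
    have := hy.1
    linarith

lemma keylog (c₂ : ℕ) (hc : c₂ ≤ 1) :
    Tendsto (fun m : ℕ => ((m:ℝ) + 3) ^ (-1 : ℝ) *
        ∑ k ∈ Finset.Icc 1 (m+1), (Lg m - Real.log ((k:ℝ) + (c₂:ℝ))) ^ 2)
      atTop (nhds 2) := by
  have hc' : (c₂:ℝ) ≤ 1 := by exact_mod_cast hc
  have hc0 : (0:ℝ) ≤ (c₂:ℝ) := Nat.cast_nonneg c₂
  -- limits of the bound functions
  have hF1 : Tendsto (fun m : ℕ => ((m:ℝ) + 3)⁻¹ * Fg (Lg m) ((m:ℝ)+1+(c₂:ℝ)))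
      atTop (nhds 2) := by
    have hld := log_diff_tendsto (c₂:ℝ) hc0
    have hsq : Tendsto (fun m : ℕ => (Lg m - Real.log ((m:ℝ)+1+(c₂:ℝ))) ^ 2
        + 2 * (Lg m - Real.log ((m:ℝ)+1+(c₂:ℝ))) + 2) atTop (nhds 2) := by
      have := ((hld.pow 2).add (hld.const_mul 2)).add_const 2
      norm_num at this
      exact this
    have hrat : Tendsto (fun m : ℕ => ((m:ℝ) + (1+(c₂:ℝ))) / ((m:ℝ) + 3)) atTop (nhds 1) :=
      tendsto_ratio2 (1+(c₂:ℝ)) 3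
    have H := hrat.mul hsq
    rw [one_mul] at H
    apply H.congr
    intro m
    have h3 : (0:ℝ) < (m:ℝ) + 3 := by positivity
    simp only [Fg]
    have e : (m:ℝ) + (1+(c₂:ℝ)) = (m:ℝ) + 1 + (c₂:ℝ) := by ring
    rw [e]
    field_simp
  have hF2 : Tendsto (fun m : ℕ => ((m:ℝ) + 3)⁻¹ * Fg (Lg m) (1+(c₂:ℝ))) atTop (nhds 0) := by
    have H := hquad ((1:ℝ)+(c₂:ℝ))
      ((1+(c₂:ℝ)) * (-2 * Real.log (1+(c₂:ℝ)) + 2))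
      ((1+(c₂:ℝ)) * ((Real.log (1+(c₂:ℝ)))^2 - 2 * Real.log (1+(c₂:ℝ)) + 2))
    apply H.congr
    intro m
    simp only [Fg]
    ring
  have hG1 : Tendsto (fun m : ℕ => ((m:ℝ) + 3)⁻¹ * (Lg m - Real.log (1+(c₂:ℝ))) ^ 2)
      atTop (nhds 0) := by
    have H := hquad (1:ℝ) (-2 * Real.log (1+(c₂:ℝ))) ((Real.log (1+(c₂:ℝ)))^2)
    apply H.congr
    intro m
    ring
  -- antitone of the summand function
  have hanti : ∀ m : ℕ, AntitoneOn (fun x : ℝ => (Lg m - Real.log (x + (c₂:ℝ))) ^ 2)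
      (Set.Icc (1:ℝ) ((m:ℝ)+1)) := by
    intro m x hx y hy hxy
    have hx1 : (1:ℝ) ≤ x := hx.1
    have hxp : (0:ℝ) < x + (c₂:ℝ) := by linarith
    have hyp : (0:ℝ) < y + (c₂:ℝ) := by linarith [hy.1]
    have hylog : Real.log (y + (c₂:ℝ)) ≤ Lg m := by
      simp only [Lg]
      apply Real.log_le_log hyp
      have := hy.2
      linarith
    have hmono : Real.log (x + (c₂:ℝ)) ≤ Real.log (y + (c₂:ℝ)) :=
      Real.log_le_log hxp (by linarith)
    have h1 : 0 ≤ Lg m - Real.log (y + (c₂:ℝ)) := by linarith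
    apply pow_le_pow_left₀ h1
    linarith
  -- bounds
  have hlow : ∀ m : ℕ, (∫ x in ((1:ℕ):ℝ)..(((m+1:ℕ)):ℝ), (Lg m - Real.log (x + (c₂:ℝ))) ^ 2)
      ≤ ∑ k ∈ Finset.Icc 1 (m+1), (Lg m - Real.log ((k:ℝ) + (c₂:ℝ))) ^ 2 := by
    intro m
    have h := AntitoneOn.integral_le_sum_Ico
      (f := fun x : ℝ => (Lg m - Real.log (x + (c₂:ℝ))) ^ 2) (a := 1) (b := m+1)
      (by omega) (by push_cast; exact hanti m)
    refine le_trans h ?_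
    rw [Finset.Ico_add_one_right_eq_Icc]
    apply Finset.sum_le_sum_of_subset_of_nonneg
    · exact Finset.Icc_subset_Icc_right (by omega)
    · intro i _ _; positivity
  have hup : ∀ m : ℕ, 1 ≤ m →
      (∑ k ∈ Finset.Icc 1 (m+1), (Lg m - Real.log ((k:ℝ) + (c₂:ℝ))) ^ 2)
      ≤ (Lg m - Real.log (1 + (c₂:ℝ))) ^ 2
        + ∫ x in ((1:ℕ):ℝ)..(((m+1:ℕ)):ℝ), (Lg m - Real.log (x + (c₂:ℝ))) ^ 2 := by
    intro m hm
    have h := AntitoneOn.sum_le_integral_Ico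
      (f := fun x : ℝ => (Lg m - Real.log (x + (c₂:ℝ))) ^ 2) (a := 1) (b := m+1)
      (by omega) (by push_cast; exact hanti m)
    rw [sum_Icc_eq_head_add (fun k => (Lg m - Real.log ((k:ℝ) + (c₂:ℝ))) ^ 2) (m+1) (by omega)]
    refine add_le_add (le_of_eq (by norm_num)) ?_
    simpa using h
  -- squeeze
  have lowlim : Tendsto (fun m : ℕ => ((m:ℝ) + 3) ^ (-1:ℝ) *
      ∫ x in ((1:ℕ):ℝ)..(((m+1:ℕ)):ℝ), (Lg m - Real.log (x + (c₂:ℝ))) ^ 2)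
      atTop (nhds 2) := by
    have H := hF1.sub hF2
    norm_num at H
    apply H.congr
    intro m
    have e : (∫ x in ((1:ℕ):ℝ)..(((m+1:ℕ)):ℝ), (Lg m - Real.log (x + (c₂:ℝ))) ^ 2)
        = Fg (Lg m) ((m:ℝ) + 1 + (c₂:ℝ)) - Fg (Lg m) (1 + (c₂:ℝ)) := by
      rw [← integral_G (Lg m) c₂ m]
      norm_num
    rw [e, Real.rpow_neg_one]
    ring
  have uplim : Tendsto (fun m : ℕ => ((m:ℝ) + 3) ^ (-1:ℝ) *
      ((Lg m - Real.log (1 + (c₂:ℝ))) ^ 2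
        + ∫ x in ((1:ℕ):ℝ)..(((m+1:ℕ)):ℝ), (Lg m - Real.log (x + (c₂:ℝ))) ^ 2))
      atTop (nhds 2) := by
    have H := hG1.add ((hF1.sub hF2))
    norm_num at H
    apply H.congr
    intro m
    have e : (∫ x in ((1:ℕ):ℝ)..(((m+1:ℕ)):ℝ), (Lg m - Real.log (x + (c₂:ℝ))) ^ 2)
        = Fg (Lg m) ((m:ℝ) + 1 + (c₂:ℝ)) - Fg (Lg m) (1 + (c₂:ℝ)) := by
      rw [← integral_G (Lg m) c₂ m]
      norm_num
    rw [e, Real.rpow_neg_one]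
    ring
  apply tendsto_of_tendsto_of_tendsto_of_le_of_le' lowlim uplim
  · apply Eventually.of_forall
    intro m
    apply mul_le_mul_of_nonneg_left (hlow m) (by positivity)
  · filter_upwards [eventually_ge_atTop 1] with m hm
    apply mul_le_mul_of_nonneg_left (hup m hm) (by positivity)






lemma hint_log (a c : ℝ) (ha : 1 ≤ a) (hac : a ≤ c) :
    (∫ x in a..c, x ^ (-1:ℝ)) = Real.log c - Real.log a := by
  have h0 : (0:ℝ) ∉ Set.uIcc a c := by
    rw [Set.uIcc_of_le hac]
    intro h
    linarith [(Set.mem_Icc.mp h).1]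
  have e : (∫ x in a..c, x ^ (-1:ℝ)) = ∫ x in a..c, x⁻¹ := by
    apply intervalIntegral.integral_congr
    intro x _
    exact Real.rpow_neg_one x
  rw [e, integral_inv h0, Real.log_div (by linarith) (by linarith)]

lemma main_log :
    Tendsto (fun m : ℕ => ((m:ℝ)+3) ^ (1 + 2*(-1:ℝ)) *
        ∑ k ∈ Finset.Icc 1 (m+1),
          (∑ i ∈ Finset.Icc (k+1) (m+2), (i:ℝ) ^ (-(2+(-1:ℝ)))) ^ 2)
      atTop (nhds (2 / ((-1:ℝ) * (1 + 2*(-1:ℝ))))) := by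
  have e1 : -(2+(-1:ℝ)) = (-1:ℝ) := by norm_num
  have e2 : (1 + 2*(-1:ℝ)) = (-1:ℝ) := by norm_num
  have e3 : (2 / ((-1:ℝ) * (1 + 2*(-1:ℝ)))) = 2 := by norm_num
  rw [e3]
  simp only [e1, e2]
  have KL := keylog 1 (le_refl 1)
  have KU := keylog 0 (by omega)
  simp only [Nat.cast_zero, Nat.cast_one, add_zero] at KL KU
  have hSnn : ∀ k m : ℕ, 0 ≤ ∑ i ∈ Finset.Icc (k+1) (m+2), (i:ℝ) ^ (-1:ℝ) :=
    fun k m => Finset.sum_nonneg fun i _ => Real.rpow_nonneg (Nat.cast_nonneg i) _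
  apply tendsto_of_tendsto_of_tendsto_of_le_of_le' KL KU
  · apply Eventually.of_forall
    intro m
    apply mul_le_mul_of_nonneg_left _ (Real.rpow_nonneg (by positivity) _)
    apply Finset.sum_le_sum
    intro k hk
    obtain ⟨hk1, hk2⟩ := Finset.mem_Icc.mp hk
    have hka : (1:ℝ) ≤ (k:ℝ) + 1 := by
      have : (0:ℝ) ≤ (k:ℝ) := Nat.cast_nonneg k
      linarith
    have hkc : (k:ℝ) + 1 ≤ (m:ℝ) + 2 := by
      have : (k:ℝ) ≤ (m:ℝ)+1 := by exact_mod_cast hk2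
      linarith
    have hnn : 0 ≤ Lg m - Real.log ((k:ℝ) + 1) := by
      have := Real.log_le_log (by linarith : (0:ℝ) < (k:ℝ)+1) hkc
      simp only [Lg]
      linarith
    apply pow_le_pow_left₀ hnn
    have := L2 (-1:ℝ) (by norm_num) k m hk1 hk2
    rw [hint_log _ _ hka hkc] at this
    simpa [Lg] using this
  · apply Eventually.of_forall
    intro m
    apply mul_le_mul_of_nonneg_left _ (Real.rpow_nonneg (by positivity) _)
    apply Finset.sum_le_sum
    intro k hk
    obtain ⟨hk1, hk2⟩ := Finset.mem_Icc.mp hk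
    have hka : (1:ℝ) ≤ (k:ℝ) := by exact_mod_cast hk1
    have hkc : (k:ℝ) ≤ (m:ℝ) + 2 := by
      have : (k:ℝ) ≤ (m:ℝ)+1 := by exact_mod_cast hk2
      linarith
    apply pow_le_pow_left₀ (hSnn k m)
    have := L1 (-1:ℝ) (by norm_num) k m hk1 (by omega)
    rw [hint_log _ _ hka hkc] at this
    simpa [Lg] using this


end S14

open Filter

/-- For every real `q < -1/2`,
`lim_{n→∞} n^(1+2q) * ∑_{k=1}^{n-2} (∑_{i=k+1}^{n-1} i^(-(2+q)))² = 2/(q(1+2q))`,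
where the powers are real powers. -/
theorem stmt_14 (q : ℝ) (hq : q < -(1/2)) :
    Tendsto
      (fun n : ℕ =>
        (n : ℝ) ^ (1 + 2*q) *
          ∑ k ∈ Finset.Icc 1 (n - 2),
            (∑ i ∈ Finset.Icc (k + 1) (n - 1), (i : ℝ) ^ (-(2 + q))) ^ 2)
      atTop (nhds (2 / (q * (1 + 2*q)))) := by
  rw [← tendsto_add_atTop_iff_nat 3]
  have H : Tendsto (fun m : ℕ => ((m:ℝ)+3) ^ (1 + 2*q) *
      ∑ k ∈ Finset.Icc 1 (m+1),
        (∑ i ∈ Finset.Icc (k+1) (m+2), (i:ℝ) ^ (-(2+q))) ^ 2)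
      atTop (nhds (2 / (q * (1 + 2*q)))) := by
    by_cases hq1 : q = -1
    · subst hq1
      exact S14.main_log
    · exact S14.main_gen q hq hq1
  apply H.congr
  intro m
  have e2 : m+3-2 = m+1 := by omega
  have e1 : m+3-1 = m+2 := by omega
  rw [e2, e1]
  push_cast
  ring
end

section
/- For every real q < −1/2 there exists δ > 0 such that n^{3/2+3q} ( Σ_{k=1}^{n−2} k^{−(1+q)(2+δ)} + Σ_{k=1}^{n−2} ( Σ_{i=k+1}^{n−1} i^{−(2+q)} )^{2+δ} ) → 0 as n → ∞. -/
open Filter Real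

-- ∑_{k=1}^N k^(p-1) ≤ N^p / p for 0 < p ≤ 1.
lemma sum_rpow_le (p : ℝ) (hp : 0 < p) (hp1 : p ≤ 1) (N : ℕ) :
    ∑ k ∈ Finset.Icc 1 N, (k : ℝ) ^ (p - 1) ≤ (N : ℝ) ^ p / p := by
  induction N with
  | zero => simp [Real.zero_rpow hp.ne']
  | succ N ih =>
    rw [Finset.sum_Icc_succ_top (by omega : 1 ≤ N + 1)]
    have hx : (1 : ℝ) ≤ (N + 1 : ℕ) := by exact_mod_cast Nat.one_le_iff_ne_zero.mpr (by omega)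
    set x : ℝ := ((N + 1 : ℕ) : ℝ) with hxdef
    have hx0 : 0 < x := lt_of_lt_of_le one_pos hx
    have key : (x - 1) ^ p + p * x ^ (p - 1) ≤ x ^ p := by
      have hs : (-1 : ℝ) ≤ -1 / x := by
        rw [neg_div]
        simp only [neg_le_neg_iff]
        rw [div_le_one hx0]; exact hx
      have hB := rpow_one_add_le_one_add_mul_self hs hp.le hp1
      have h1 : (1 : ℝ) + -1 / x = 1 - 1/x := by ring
      have h2 : (x - 1) ^ p = x ^ p * (1 - 1/x) ^ p := by
        rw [← Real.mul_rpow (le_of_lt hx0) (by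
          rw [sub_nonneg, div_le_one hx0]; exact hx)]
        congr 1
        field_simp
      rw [h2]
      have h3 : (1 - 1/x) ^ p ≤ 1 + p * (-1/x) := by rw [← h1]; exact hB
      have h4 : x ^ p * (1 - 1/x) ^ p ≤ x ^ p * (1 + p * (-1/x)) :=
        mul_le_mul_of_nonneg_left h3 (Real.rpow_nonneg hx0.le _)
      have h5 : x ^ p * (1 + p * (-1/x)) = x ^ p - p * (x ^ p / x) := by
        field_simp; ring
      have h6 : x ^ (p - 1) = x ^ p / x := Real.rpow_sub_one hx0.ne' p
      rw [h6]
      linarith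
    have hN : ((N : ℕ) : ℝ) = x - 1 := by push_cast [hxdef]; ring
    have hlast : ((N : ℕ) : ℝ) ^ p / p + x ^ (p - 1) ≤ x ^ p / p := by
      rw [hN]
      rw [div_add' _ _ _ hp.ne']
      exact (div_le_div_iff_of_pos_right hp).mpr (by linarith)
    calc ∑ k ∈ Finset.Icc 1 N, (k : ℝ) ^ (p - 1) + x ^ (p - 1)
        ≤ ((N : ℕ) : ℝ) ^ p / p + x ^ (p - 1) := by linarith [ih]
      _ ≤ x ^ p / p := hlast

-- Tail comparison for 1 < b < 2.
lemma tail_sum_rpow_le (b : ℝ) (hb1 : 1 < b) (hb2 : b < 2) (k : ℕ) (hk : 1 ≤ k)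
    (m : ℕ) (hm : k ≤ m) :
    ∑ i ∈ Finset.Icc (k + 1) m, (i : ℝ) ^ (-b) ≤ ((k : ℝ) ^ (1 - b) - (m : ℝ) ^ (1 - b)) / (b - 1) := by
  induction m, hm using Nat.le_induction with
  | base => simp [Finset.Icc_eq_empty_of_lt (Nat.lt_succ_self k)]
  | succ m hm ih =>
    rw [Finset.sum_Icc_succ_top (by omega : k + 1 ≤ m + 1)]
    have hx2 : (2 : ℝ) ≤ ((m + 1 : ℕ) : ℝ) := by exact_mod_cast by omega
    set x : ℝ := ((m + 1 : ℕ) : ℝ) with hxdef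
    have hx0 : 0 < x := by linarith
    have hx1 : 1 < x := by linarith
    have key : x ^ (1 - b) + (b - 1) * x ^ (-b) ≤ (x - 1) ^ (1 - b) := by
      have hu0 : 0 < 1 - 1/x := by
        rw [sub_pos, div_lt_one hx0]; exact hx1
      have hs : (-1 : ℝ) ≤ -1 / x := by
        rw [neg_div, neg_le_neg_iff, div_le_one hx0]; linarith
      have hB : (1 - 1/x) ^ (b - 1) ≤ 1 - (b - 1) / x := by
        have := rpow_one_add_le_one_add_mul_self hs (by linarith : (0:ℝ) ≤ b - 1) (by linarith)
        calc (1 - 1/x) ^ (b-1) = (1 + (-1/x)) ^ (b-1) := by ring_nf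
          _ ≤ 1 + (b-1) * (-1/x) := this
          _ = 1 - (b-1)/x := by ring
      have ht : 0 < 1 - (b - 1) / x := by
        have : (b-1)/x < 1 := by rw [div_lt_one hx0]; linarith
        linarith
      have hupos : 0 < (1 - 1/x) ^ (b - 1) := Real.rpow_pos_of_pos hu0 _
      have hinv : (1 - (b-1)/x)⁻¹ ≤ ((1 - 1/x) ^ (b-1))⁻¹ :=
        inv_anti₀ hupos hB
      have hinv2 : 1 + (b-1)/x ≤ (1 - (b-1)/x)⁻¹ := by
        rw [inv_eq_one_div, le_div_iff₀ ht]
        nlinarith [sq_nonneg ((b-1)/x)]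
      have hneg : (1 - 1/x) ^ (1 - b) = ((1 - 1/x) ^ (b - 1))⁻¹ := by
        rw [← Real.rpow_neg hu0.le]; ring_nf
      have h7 : 1 + (b-1)/x ≤ (1 - 1/x) ^ (1 - b) := by
        rw [hneg]; exact le_trans hinv2 hinv
      have h8 : (x - 1) ^ (1 - b) = x ^ (1 - b) * (1 - 1/x) ^ (1 - b) := by
        rw [← Real.mul_rpow hx0.le hu0.le]
        congr 1; field_simp
      have h9 : x ^ (1 - b) * (1 + (b-1)/x) ≤ x ^ (1 - b) * (1 - 1/x) ^ (1 - b) :=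
        mul_le_mul_of_nonneg_left h7 (Real.rpow_nonneg hx0.le _)
      have h10 : x ^ (1 - b) * (1 + (b-1)/x) = x ^ (1-b) + (b-1) * (x ^ (1-b) / x) := by
        field_simp
      have h11 : x ^ (-b) = x ^ (1-b) / x := by
        rw [← Real.rpow_sub_one hx0.ne']; ring_nf
      rw [h8, h11]
      linarith
    have hb1' : 0 < b - 1 := by linarith
    have hterm : x ^ (-b) ≤ ((m : ℝ) ^ (1-b) - x ^ (1-b)) / (b-1) := by
      have hM : ((m : ℕ) : ℝ) = x - 1 := by push_cast [hxdef]; ring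
      rw [hM, le_div_iff₀ hb1']
      linarith
    have hsplit : ((k:ℝ) ^ (1-b) - (m:ℝ) ^ (1-b)) / (b-1) + ((m:ℝ) ^ (1-b) - x ^ (1-b)) / (b-1)
        = ((k:ℝ) ^ (1-b) - x ^ (1-b)) / (b-1) := by ring
    linarith [ih]

-- Master limit lemma.
lemma master (f : ℕ → ℝ) (α s t A B : ℝ)
    (hf0 : ∀ n : ℕ, 3 ≤ n → 0 ≤ f n)
    (hf : ∀ n : ℕ, 3 ≤ n → f n ≤ A * (n : ℝ) ^ s + B * (n : ℝ) ^ t)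
    (hs : α + s < 0) (ht : α + t < 0) :
    Tendsto (fun n : ℕ => (n : ℝ) ^ α * f n) atTop (nhds 0) := by
  have hg : Tendsto (fun n : ℕ => A * (n : ℝ) ^ (α + s) + B * (n : ℝ) ^ (α + t)) atTop (nhds 0) := by
    have h1 : Tendsto (fun n : ℕ => (n : ℝ) ^ (α + s)) atTop (nhds 0) := by
      have := (tendsto_rpow_neg_atTop (by linarith : (0:ℝ) < -(α + s))).comp
        tendsto_natCast_atTop_atTop (α := ℕ)
      simpa [Function.comp_def] using this
    have h2 : Tendsto (fun n : ℕ => (n : ℝ) ^ (α + t)) atTop (nhds 0) := by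
      have := (tendsto_rpow_neg_atTop (by linarith : (0:ℝ) < -(α + t))).comp
        tendsto_natCast_atTop_atTop (α := ℕ)
      simpa [Function.comp_def] using this
    have := ((h1.const_mul A).add (h2.const_mul B))
    simpa using this
  apply squeeze_zero' (g := fun n : ℕ => A * (n : ℝ) ^ (α + s) + B * (n : ℝ) ^ (α + t))
    ?_ ?_ hg
  · filter_upwards [eventually_ge_atTop 3] with n hn
    exact mul_nonneg (Real.rpow_nonneg (Nat.cast_nonneg n) _) (hf0 n hn)
  · filter_upwards [eventually_ge_atTop 3] with n hn
    have hn0 : (0:ℝ) < (n:ℝ) := by exact_mod_cast Nat.lt_of_lt_of_le (by norm_num) hn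
    have h1 : (n:ℝ) ^ α * f n ≤ (n:ℝ) ^ α * (A * (n : ℝ) ^ s + B * (n : ℝ) ^ t) :=
      mul_le_mul_of_nonneg_left (hf n hn) (Real.rpow_nonneg hn0.le _)
    calc (n:ℝ) ^ α * f n ≤ (n:ℝ) ^ α * (A * (n : ℝ) ^ s + B * (n : ℝ) ^ t) := h1
      _ = A * (n : ℝ) ^ (α + s) + B * (n : ℝ) ^ (α + t) := by
          rw [Real.rpow_add hn0, Real.rpow_add hn0]; ring

-- crude sum bound: each term ≤ n^e
lemma sum_le_pow (e : ℝ) (he : 0 ≤ e) (n N : ℕ) (hN : N ≤ n) :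
    ∑ k ∈ Finset.Icc 1 N, (k : ℝ) ^ e ≤ (n : ℝ) ^ (1 + e) := by
  rcases Nat.eq_zero_or_pos n with rfl | hn
  · interval_cases N
    simp
    positivity
  have hn0 : (0:ℝ) < n := by exact_mod_cast hn
  have h1 : ∀ k ∈ Finset.Icc 1 N, (k : ℝ) ^ e ≤ (n : ℝ) ^ e := by
    intro k hk
    apply Real.rpow_le_rpow (Nat.cast_nonneg k) _ he
    exact_mod_cast le_trans (Finset.mem_Icc.mp hk).2 hN
  calc ∑ k ∈ Finset.Icc 1 N, (k : ℝ) ^ e ≤ (Finset.Icc 1 N).card • (n : ℝ) ^ e :=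
        Finset.sum_le_card_nsmul _ _ _ h1
    _ = (N : ℝ) * (n : ℝ) ^ e := by
        rw [Nat.card_Icc]; simp [nsmul_eq_mul]
    _ ≤ (n : ℝ) * (n : ℝ) ^ e := by
        have : (N:ℝ) ≤ (n:ℝ) := by exact_mod_cast hN
        exact mul_le_mul_of_nonneg_right this (Real.rpow_nonneg hn0.le _)
    _ = (n : ℝ) ^ (1 + e) := by
        rw [Real.rpow_add hn0, Real.rpow_one]

-- inner sum bound by raising the exponent
lemma inner2 (b p2 : ℝ) (hp0 : 0 < p2) (hp1 : p2 ≤ 1) (hbp : -b ≤ p2 - 1)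
    (n k M : ℕ) (hM : M ≤ n) :
    ∑ i ∈ Finset.Icc (k + 1) M, (i : ℝ) ^ (-b) ≤ (n : ℝ) ^ p2 / p2 := by
  have h1 : ∑ i ∈ Finset.Icc (k + 1) M, (i : ℝ) ^ (-b)
      ≤ ∑ i ∈ Finset.Icc 1 M, (i : ℝ) ^ (-b) :=
    Finset.sum_le_sum_of_subset_of_nonneg
      (Finset.Icc_subset_Icc (by omega) le_rfl)
      (fun i _ _ => Real.rpow_nonneg (Nat.cast_nonneg i) _)
  have h2 : ∑ i ∈ Finset.Icc 1 M, (i : ℝ) ^ (-b)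
      ≤ ∑ i ∈ Finset.Icc 1 M, (i : ℝ) ^ (p2 - 1) := by
    apply Finset.sum_le_sum
    intro i hi
    have : (1 : ℝ) ≤ (i : ℝ) := by exact_mod_cast (Finset.mem_Icc.mp hi).1
    exact Real.rpow_le_rpow_of_exponent_le this hbp
  have h3 := sum_rpow_le p2 hp0 hp1 M
  have h4 : (M : ℝ) ^ p2 / p2 ≤ (n : ℝ) ^ p2 / p2 := by
    apply (div_le_div_iff_of_pos_right hp0).mpr
    exact Real.rpow_le_rpow (Nat.cast_nonneg M) (by exact_mod_cast hM) hp0.le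
  linarith

-- inner sum bound for nonpositive b
lemma inner3 (b : ℝ) (hb : b ≤ 0) (n k M : ℕ) (hM : M ≤ n) :
    ∑ i ∈ Finset.Icc (k + 1) M, (i : ℝ) ^ (-b) ≤ (n : ℝ) ^ (1 - b) := by
  have h1 : ∑ i ∈ Finset.Icc (k + 1) M, (i : ℝ) ^ (-b)
      ≤ ∑ i ∈ Finset.Icc 1 M, (i : ℝ) ^ (-b) :=
    Finset.sum_le_sum_of_subset_of_nonneg
      (Finset.Icc_subset_Icc (by omega) le_rfl)
      (fun i _ _ => Real.rpow_nonneg (Nat.cast_nonneg i) _)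
  have h2 := sum_le_pow (-b) (by linarith) n M hM
  have h3 : (1 : ℝ) + -b = 1 - b := by ring
  rw [h3] at h2
  linarith

-- crude: N terms each bounded by C * n^u
lemma sum_bound_crude (f : ℕ → ℝ) (C u : ℝ) (hC : 0 ≤ C) (n N : ℕ) (hN : N ≤ n)
    (h : ∀ k ∈ Finset.Icc 1 N, f k ≤ C * (n : ℝ) ^ u) :
    ∑ k ∈ Finset.Icc 1 N, f k ≤ C * (n : ℝ) ^ (1 + u) := by
  rcases Nat.eq_zero_or_pos n with rfl | hn
  · interval_cases N
    simp
    positivity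
  have hn0 : (0 : ℝ) < n := by exact_mod_cast hn
  calc ∑ k ∈ Finset.Icc 1 N, f k ≤ (Finset.Icc 1 N).card • (C * (n : ℝ) ^ u) :=
        Finset.sum_le_card_nsmul _ _ _ h
    _ = (N : ℝ) * (C * (n : ℝ) ^ u) := by rw [Nat.card_Icc]; simp [nsmul_eq_mul]
    _ ≤ (n : ℝ) * (C * (n : ℝ) ^ u) := by
        have hNn : (N : ℝ) ≤ (n : ℝ) := by exact_mod_cast hN
        exact mul_le_mul_of_nonneg_right hNn (by positivity)
    _ = C * (n : ℝ) ^ (1 + u) := by rw [Real.rpow_add hn0, Real.rpow_one]; ring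

-- reduction: it suffices to bound the two sums separately
lemma case_reduce (q δ : ℝ) (A B s t : ℝ)
    (h1 : ∀ n : ℕ, 3 ≤ n →
      (∑ k ∈ Finset.Icc 1 (n - 2), (k : ℝ) ^ (-((1 + q) * (2 + δ)))) ≤ A * (n : ℝ) ^ s)
    (h2 : ∀ n : ℕ, 3 ≤ n →
      (∑ k ∈ Finset.Icc 1 (n - 2),
        (∑ i ∈ Finset.Icc (k + 1) (n - 1), (i : ℝ) ^ (-(2 + q))) ^ (2 + δ)) ≤ B * (n : ℝ) ^ t)
    (hs : 3/2 + 3*q + s < 0) (ht : 3/2 + 3*q + t < 0) :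
    Tendsto
      (fun n : ℕ =>
        (n : ℝ) ^ (3/2 + 3*q) *
          ((∑ k ∈ Finset.Icc 1 (n - 2), (k : ℝ) ^ (-((1 + q) * (2 + δ)))) +
            ∑ k ∈ Finset.Icc 1 (n - 2),
              (∑ i ∈ Finset.Icc (k + 1) (n - 1), (i : ℝ) ^ (-(2 + q))) ^ (2 + δ)))
      atTop (nhds 0) := by
  apply master _ (3/2 + 3*q) s t A B
  · intro n hn
    positivity
  · intro n hn
    exact add_le_add (h1 n hn) (h2 n hn)
  · exact hs
  · exact ht

-- the middle case: -2 < q ≤ -1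
lemma case2main (q : ℝ) (hq : q < -(1/2)) (hq3 : -2 < q) (hq2 : q ≤ -1) :
    ∃ δ : ℝ, 0 < δ ∧
      Tendsto
        (fun n : ℕ =>
          (n : ℝ) ^ (3/2 + 3*q) *
            ((∑ k ∈ Finset.Icc 1 (n - 2), (k : ℝ) ^ (-((1 + q) * (2 + δ)))) +
              ∑ k ∈ Finset.Icc 1 (n - 2),
                (∑ i ∈ Finset.Icc (k + 1) (n - 1), (i : ℝ) ^ (-(2 + q))) ^ (2 + δ)))
        atTop (nhds 0) := by
  refine ⟨(-(1/2) - q)/4, by linarith, ?_⟩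
  set δ : ℝ := (-(1/2) - q)/4 with hδdef
  have hδ : 0 < δ := by rw [hδdef]; linarith
  set ε : ℝ := min ((2+q)/2) ((-(1/2)-q)/12) with hεdef
  have hε0 : 0 < ε := lt_min (by linarith) (by linarith)
  have hε2 : ε ≤ (-(1/2)-q)/12 := min_le_right _ _
  have hε1 : ε ≤ (2+q)/2 := min_le_left _ _
  have hp0 : 0 < ε + (-1 - q) := by linarith
  have hp1 : ε + (-1 - q) ≤ 1 := by linarith
  have hbp : -(2+q) ≤ (ε + (-1 - q)) - 1 := by linarith
  apply case_reduce q δ 1 (((ε + (-1 - q))^(2+δ))⁻¹)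
    (1 + -((1+q)*(2+δ))) (1 + (ε + (-1 - q))*(2+δ))
  · intro n hn
    have he : 0 ≤ -((1+q)*(2+δ)) := by
      nlinarith [mul_nonneg (by linarith : (0:ℝ) ≤ -(1+q)) (by linarith : (0:ℝ) ≤ 2+δ)]
    rw [one_mul]
    exact sum_le_pow _ he n (n-2) (Nat.sub_le n 2)
  · intro n hn
    apply sum_bound_crude _ _ ((ε + (-1 - q))*(2+δ))
      (inv_nonneg.mpr (Real.rpow_nonneg hp0.le _)) n (n-2) (Nat.sub_le n 2)
    intro k hk
    have hIb := inner2 (2+q) (ε + (-1 - q)) hp0 hp1 hbp n k (n-1) (Nat.sub_le n 1)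
    have hI0 : 0 ≤ ∑ i ∈ Finset.Icc (k + 1) (n - 1), (i : ℝ) ^ (-(2 + q)) :=
      Finset.sum_nonneg fun i _ => Real.rpow_nonneg (Nat.cast_nonneg i) _
    have hstep := Real.rpow_le_rpow hI0 hIb (by linarith : (0:ℝ) ≤ 2 + δ)
    have heq : ((n : ℝ) ^ (ε + (-1 - q)) / (ε + (-1 - q))) ^ (2+δ)
        = ((ε + (-1 - q))^(2+δ))⁻¹ * (n : ℝ) ^ ((ε + (-1 - q))*(2+δ)) := by
      rw [Real.div_rpow (Real.rpow_nonneg (Nat.cast_nonneg n) _) hp0.le,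
        ← Real.rpow_mul (Nat.cast_nonneg n)]
      ring
    rw [heq] at hstep
    exact hstep
  · rw [hδdef]
    nlinarith [mul_pos (show (0:ℝ) < -(2*q+1) by linarith) (show (0:ℝ) < q+5 by linarith)]
  · have h2d : 2 + δ ≤ 3 := by rw [hδdef]; linarith
    have hA : ε*(2+δ) ≤ (-(1/2)-q)/4 := by
      calc ε*(2+δ) ≤ ((-(1/2)-q)/12)*(2+δ) := mul_le_mul_of_nonneg_right hε2 (by linarith)
        _ ≤ ((-(1/2)-q)/12)*3 := mul_le_mul_of_nonneg_left h2d (by linarith)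
        _ = (-(1/2)-q)/4 := by ring
    rw [hδdef] at hA ⊢
    nlinarith [hA, hε0,
      mul_pos (show (0:ℝ) < -(2*q+1) by linarith) (show (0:ℝ) < q+4 by linarith)]

/-- For every real `q < -1/2` there exists `δ > 0` such that
`n^(3/2+3q) * (∑_{k=1}^{n-2} k^(-(1+q)(2+δ)) + ∑_{k=1}^{n-2} (∑_{i=k+1}^{n-1} i^(-(2+q)))^(2+δ))`
tends to `0` as `n → ∞`, where all powers are real powers. -/
theorem stmt_16 (q : ℝ) (hq : q < -(1/2)) :
    ∃ δ : ℝ, 0 < δ ∧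
      Tendsto
        (fun n : ℕ =>
          (n : ℝ) ^ (3/2 + 3*q) *
            ((∑ k ∈ Finset.Icc 1 (n - 2), (k : ℝ) ^ (-((1 + q) * (2 + δ)))) +
              ∑ k ∈ Finset.Icc 1 (n - 2),
                (∑ i ∈ Finset.Icc (k + 1) (n - 1), (i : ℝ) ^ (-(2 + q))) ^ (2 + δ)))
        atTop (nhds 0) := by
  rcases lt_or_ge (-1 : ℝ) q with hq2 | hq2
  · -- -1 < q < -1/2
    have hq1 : (0:ℝ) < 1 + q := by linarith
    refine ⟨(-(1/2) - q) / (2*(1+q)), div_pos (by linarith) (by linarith), ?_⟩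
    set δ : ℝ := (-(1/2) - q) / (2*(1+q)) with hδdef
    have hδ : 0 < δ := div_pos (by linarith) (by linarith)
    have hδq : (1+q) * δ = (-(1/2) - q)/2 := by
      rw [hδdef]; field_simp
    have ha : (1+q)*(2+δ) = 7/4 + 3*q/2 := by
      have expand : (1+q)*(2+δ) = 2*(1+q) + (1+q)*δ := by ring
      rw [expand, hδq]; ring
    set p : ℝ := -3/4 - 3*q/2 with hpdef
    have hp : 0 < p := by rw [hpdef]; linarith
    have hp1 : p ≤ 1 := by rw [hpdef]; linarith
    have hrw : -((1+q)*(2+δ)) = p - 1 := by rw [ha, hpdef]; ring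
    apply case_reduce q δ (1/p) ((((2+q)-1)^(2+δ))⁻¹ / p) p p
    · intro n hn
      simp only [hrw]
      calc ∑ k ∈ Finset.Icc 1 (n-2), (k : ℝ) ^ (p - 1)
          ≤ ((n-2 : ℕ) : ℝ) ^ p / p := sum_rpow_le p hp hp1 (n-2)
        _ ≤ (n : ℝ) ^ p / p := by
            apply (div_le_div_iff_of_pos_right hp).mpr
            exact Real.rpow_le_rpow (Nat.cast_nonneg _)
              (by exact_mod_cast Nat.sub_le n 2) hp.le
        _ = (1/p) * (n : ℝ) ^ p := by ring
    · intro n hn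
      have hb1 : (1:ℝ) < 2 + q := by linarith
      have hb2 : (2:ℝ) + q < 2 := by linarith
      have hd : (0:ℝ) < (2+q) - 1 := by linarith
      have hkb : ∀ k ∈ Finset.Icc 1 (n-2),
          (∑ i ∈ Finset.Icc (k + 1) (n - 1), (i : ℝ) ^ (-(2 + q))) ^ (2 + δ)
            ≤ (((2+q)-1)^(2+δ))⁻¹ * (k : ℝ) ^ (p - 1) := by
        intro k hk
        obtain ⟨hk1, hk2⟩ := Finset.mem_Icc.mp hk
        have hkM : k ≤ n - 1 := by omega
        have htail := tail_sum_rpow_le (2+q) hb1 hb2 k hk1 (n-1) hkM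
        have hI0 : 0 ≤ ∑ i ∈ Finset.Icc (k + 1) (n - 1), (i : ℝ) ^ (-(2 + q)) :=
          Finset.sum_nonneg fun i _ => Real.rpow_nonneg (Nat.cast_nonneg i) _
        have htail2 : ∑ i ∈ Finset.Icc (k + 1) (n - 1), (i : ℝ) ^ (-(2 + q))
            ≤ (k : ℝ) ^ (1-(2+q)) / ((2+q)-1) := by
          refine le_trans htail ?_
          apply (div_le_div_iff_of_pos_right hd).mpr
          have := Real.rpow_nonneg (Nat.cast_nonneg (n-1)) (1-(2+q))
          linarith
        have hstep := Real.rpow_le_rpow hI0 htail2 (by linarith : (0:ℝ) ≤ 2 + δ)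
        have heq : ((k : ℝ) ^ (1-(2+q)) / ((2+q)-1)) ^ (2+δ)
            = (((2+q)-1)^(2+δ))⁻¹ * (k : ℝ) ^ (p - 1) := by
          rw [Real.div_rpow (Real.rpow_nonneg (Nat.cast_nonneg k) _) hd.le,
            ← Real.rpow_mul (Nat.cast_nonneg k)]
          have hexp : (1-(2+q)) * (2+δ) = p - 1 := by
            have e2 : (1-(2+q))*(2+δ) = -((1+q)*(2+δ)) := by ring
            rw [e2, ha, hpdef]; ring
          rw [hexp]
          ring
        rw [heq] at hstep
        exact hstep
      calc ∑ k ∈ Finset.Icc 1 (n-2),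
            (∑ i ∈ Finset.Icc (k + 1) (n - 1), (i : ℝ) ^ (-(2 + q))) ^ (2 + δ)
          ≤ ∑ k ∈ Finset.Icc 1 (n-2), (((2+q)-1)^(2+δ))⁻¹ * (k : ℝ) ^ (p - 1) :=
            Finset.sum_le_sum hkb
        _ = (((2+q)-1)^(2+δ))⁻¹ * ∑ k ∈ Finset.Icc 1 (n-2), (k : ℝ) ^ (p - 1) := by
            rw [← Finset.mul_sum]
        _ ≤ (((2+q)-1)^(2+δ))⁻¹ * ((n : ℝ) ^ p / p) := by
            apply mul_le_mul_of_nonneg_left _ (inv_nonneg.mpr (Real.rpow_nonneg hd.le _))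
            calc ∑ k ∈ Finset.Icc 1 (n-2), (k : ℝ) ^ (p - 1)
                ≤ ((n-2 : ℕ) : ℝ) ^ p / p := sum_rpow_le p hp hp1 (n-2)
              _ ≤ (n : ℝ) ^ p / p := by
                  apply (div_le_div_iff_of_pos_right hp).mpr
                  exact Real.rpow_le_rpow (Nat.cast_nonneg _)
                    (by exact_mod_cast Nat.sub_le n 2) hp.le
        _ = (((2+q)-1)^(2+δ))⁻¹ / p * (n : ℝ) ^ p := by ring
    · rw [hpdef]; linarith
    · rw [hpdef]; linarith
  · rcases le_or_gt q (-2) with hq3 | hq3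
    · -- q ≤ -2
      have hd0 : (0:ℝ) < -1 - q := by linarith
      refine ⟨(-(1/2) - q) / (2*(-1-q)), div_pos (by linarith) (by linarith), ?_⟩
      set δ : ℝ := (-(1/2) - q) / (2*(-1-q)) with hδdef
      have hδ : 0 < δ := div_pos (by linarith) (by linarith)
      have key : (1+q) * δ = (1/2 + q)/2 := by
        rw [hδdef]; field_simp; ring
      apply case_reduce q δ 1 1 (1 + -((1+q)*(2+δ))) (1 + (1-(2+q))*(2+δ))
      · intro n hn
        have he : 0 ≤ -((1+q)*(2+δ)) := by
          nlinarith [mul_nonneg (by linarith : (0:ℝ) ≤ -(1+q)) (by linarith : (0:ℝ) ≤ 2+δ)]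
        rw [one_mul]
        exact sum_le_pow _ he n (n-2) (Nat.sub_le n 2)
      · intro n hn
        apply sum_bound_crude _ 1 ((1-(2+q))*(2+δ)) zero_le_one n (n-2) (Nat.sub_le n 2)
        intro k hk
        have hIb := inner3 (2+q) (by linarith) n k (n-1) (Nat.sub_le n 1)
        have hI0 : 0 ≤ ∑ i ∈ Finset.Icc (k + 1) (n - 1), (i : ℝ) ^ (-(2 + q)) :=
          Finset.sum_nonneg fun i _ => Real.rpow_nonneg (Nat.cast_nonneg i) _
        have hstep := Real.rpow_le_rpow hI0 hIb (by linarith : (0:ℝ) ≤ 2 + δ)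
        calc (∑ i ∈ Finset.Icc (k + 1) (n - 1), (i : ℝ) ^ (-(2 + q))) ^ (2 + δ)
            ≤ ((n:ℝ) ^ (1-(2+q))) ^ (2+δ) := hstep
          _ = 1 * (n:ℝ) ^ ((1-(2+q))*(2+δ)) := by
              rw [← Real.rpow_mul (Nat.cast_nonneg n), one_mul]
      · linarith [key]
      · linarith [key]
    · -- -2 < q ≤ -1
      exact case2main q hq hq3 hq2
end
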